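/- arXiv:1507.02890 — 9 statements merged into one kernel-verified Lean document; each statement's English description precedes it below -/
import Mathlib

section
/- A finite poset is series-parallel (i.e., obtained from singletons by finitely many sequential and parallel products) if and only if it is N-free, i.e., it contains no four elements x1, x2, x3, x4 whose induced order relations are exactly x1 < x2, x3 < x2, x3 < x4. -/
/-- A finite poset. -/
structure FinPoset where
  carrier : Type
  [fin : Fintype carrier]
  [po : PartialOrder carrier]

attribute [instance] FinPoset.fin FinPoset.po

/-- Order isomorphism of finite posets. -/
def FinPoset.Iso (P Q : FinPoset) : Prop :=
  ∃ e : P.carrier ≃ Q.carrier, ∀ x y : P.carrier, x < y ↔ e x < e y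

/-- Parallel product: disjoint union with no new comparabilities. -/
def FinPoset.par (P Q : FinPoset) : FinPoset where
  carrier := P.carrier ⊕ Q.carrier

/-- Sequential product: disjoint union with all of `P` below all of `Q`. -/
def FinPoset.seq (P Q : FinPoset) : FinPoset where
  carrier := P.carrier ⊕ₗ Q.carrier
  fin := inferInstanceAs (Fintype (P.carrier ⊕ Q.carrier))

/-- The class of series-parallel finite posets: the smallest class (closed under
isomorphism) containing the empty poset and the one-element posets, and closed
under sequential and parallel products. -/
inductive IsSP : FinPoset → Prop where
  | empty (P : FinPoset) : IsEmpty P.carrier → IsSP P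
  | single (P : FinPoset) : Nonempty P.carrier → Subsingleton P.carrier → IsSP P
  | seq {P Q : FinPoset} : IsSP P → IsSP Q → IsSP (P.seq Q)
  | par {P Q : FinPoset} : IsSP P → IsSP Q → IsSP (P.par Q)
  | iso {P Q : FinPoset} : IsSP P → P.Iso Q → IsSP Q

/-- A poset is N-free if it contains no four elements whose induced order
relations are exactly `x1 < x2`, `x3 < x2`, `x3 < x4`. -/
def FinPoset.NFree (P : FinPoset) : Prop :=
  ¬ ∃ x1 x2 x3 x4 : P.carrier,
      x1 < x2 ∧ x3 < x2 ∧ x3 < x4 ∧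
      x1 ≠ x3 ∧ x1 ≠ x4 ∧ x2 ≠ x4 ∧
      ¬ (x1 < x3 ∨ x3 < x1) ∧ ¬ (x1 < x4 ∨ x4 < x1) ∧ ¬ (x2 < x4 ∨ x4 < x2)


open Sum

lemma nfree_par {P Q : FinPoset} (hP : P.NFree) (hQ : Q.NFree) : (P.par Q).NFree := by
  rintro ⟨x1, x2, x3, x4, h12, h32, h34, n13, n14, n24, i13, i14, i24⟩
  obtain x1 | x1 := x1 <;> obtain x2 | x2 := x2 <;> obtain x3 | x3 := x3 <;>
      obtain x4 | x4 := x4 <;>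
    first
      | exact Sum.not_inl_lt_inr h12 | exact Sum.not_inr_lt_inl h12
      | exact Sum.not_inl_lt_inr h32 | exact Sum.not_inr_lt_inl h32
      | exact Sum.not_inl_lt_inr h34 | exact Sum.not_inr_lt_inl h34
      | exact hP ⟨x1, x2, x3, x4, Sum.inl_lt_inl_iff.mp h12, Sum.inl_lt_inl_iff.mp h32,
          Sum.inl_lt_inl_iff.mp h34,
          fun h => n13 (by rw [h]), fun h => n14 (by rw [h]), fun h => n24 (by rw [h]),
          fun h => i13 (h.imp Sum.inl_lt_inl_iff.mpr Sum.inl_lt_inl_iff.mpr),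
          fun h => i14 (h.imp Sum.inl_lt_inl_iff.mpr Sum.inl_lt_inl_iff.mpr),
          fun h => i24 (h.imp Sum.inl_lt_inl_iff.mpr Sum.inl_lt_inl_iff.mpr)⟩
      | exact hQ ⟨x1, x2, x3, x4, Sum.inr_lt_inr_iff.mp h12, Sum.inr_lt_inr_iff.mp h32,
          Sum.inr_lt_inr_iff.mp h34,
          fun h => n13 (by rw [h]), fun h => n14 (by rw [h]), fun h => n24 (by rw [h]),
          fun h => i13 (h.imp Sum.inr_lt_inr_iff.mpr Sum.inr_lt_inr_iff.mpr),
          fun h => i14 (h.imp Sum.inr_lt_inr_iff.mpr Sum.inr_lt_inr_iff.mpr),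
          fun h => i24 (h.imp Sum.inr_lt_inr_iff.mpr Sum.inr_lt_inr_iff.mpr)⟩

lemma nfree_seq {P Q : FinPoset} (hP : P.NFree) (hQ : Q.NFree) : (P.seq Q).NFree := by
  rintro ⟨x1, x2, x3, x4, h12, h32, h34, n13, n14, n24, i13, i14, i24⟩
  obtain x1 | x1 := x1 <;> obtain x2 | x2 := x2 <;> obtain x3 | x3 := x3 <;>
      obtain x4 | x4 := x4 <;>
    first
      | exact i13 (Or.inl (Sum.Lex.inl_lt_inr x1 x3))
      | exact i13 (Or.inr (Sum.Lex.inl_lt_inr x3 x1))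
      | exact i14 (Or.inl (Sum.Lex.inl_lt_inr x1 x4))
      | exact i14 (Or.inr (Sum.Lex.inl_lt_inr x4 x1))
      | exact i24 (Or.inl (Sum.Lex.inl_lt_inr x2 x4))
      | exact i24 (Or.inr (Sum.Lex.inl_lt_inr x4 x2))
      | exact Sum.Lex.not_inr_lt_inl h12
      | exact Sum.Lex.not_inr_lt_inl h32
      | exact Sum.Lex.not_inr_lt_inl h34
      | exact hP ⟨x1, x2, x3, x4, Sum.Lex.inl_lt_inl_iff.mp h12, Sum.Lex.inl_lt_inl_iff.mp h32,
          Sum.Lex.inl_lt_inl_iff.mp h34,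
          fun h => n13 (by rw [h]), fun h => n14 (by rw [h]), fun h => n24 (by rw [h]),
          fun h => i13 (h.imp Sum.Lex.inl_lt_inl_iff.mpr Sum.Lex.inl_lt_inl_iff.mpr),
          fun h => i14 (h.imp Sum.Lex.inl_lt_inl_iff.mpr Sum.Lex.inl_lt_inl_iff.mpr),
          fun h => i24 (h.imp Sum.Lex.inl_lt_inl_iff.mpr Sum.Lex.inl_lt_inl_iff.mpr)⟩
      | exact hQ ⟨x1, x2, x3, x4, Sum.Lex.inr_lt_inr_iff.mp h12, Sum.Lex.inr_lt_inr_iff.mp h32,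
          Sum.Lex.inr_lt_inr_iff.mp h34,
          fun h => n13 (by rw [h]), fun h => n14 (by rw [h]), fun h => n24 (by rw [h]),
          fun h => i13 (h.imp Sum.Lex.inr_lt_inr_iff.mpr Sum.Lex.inr_lt_inr_iff.mpr),
          fun h => i14 (h.imp Sum.Lex.inr_lt_inr_iff.mpr Sum.Lex.inr_lt_inr_iff.mpr),
          fun h => i24 (h.imp Sum.Lex.inr_lt_inr_iff.mpr Sum.Lex.inr_lt_inr_iff.mpr)⟩

lemma nfree_iso {P Q : FinPoset} (h : P.Iso Q) (hP : P.NFree) : Q.NFree := by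
  obtain ⟨e, he⟩ := h
  rintro ⟨x1, x2, x3, x4, h12, h32, h34, n13, n14, n24, i13, i14, i24⟩
  have key : ∀ a b : Q.carrier, e.symm a < e.symm b ↔ a < b := by
    intro a b; rw [he]; simp
  exact hP ⟨e.symm x1, e.symm x2, e.symm x3, e.symm x4,
    (key _ _).mpr h12, (key _ _).mpr h32, (key _ _).mpr h34,
    fun h => n13 (e.symm.injective h), fun h => n14 (e.symm.injective h),
    fun h => n24 (e.symm.injective h),
    fun h => i13 (h.imp (key _ _).mp (key _ _).mp),
    fun h => i14 (h.imp (key _ _).mp (key _ _).mp),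
    fun h => i24 (h.imp (key _ _).mp (key _ _).mp)⟩


noncomputable def FinPoset.sub (P : FinPoset) (S : Set P.carrier) : FinPoset :=
  { carrier := S, fin := (Set.toFinite S).fintype, po := inferInstance }

lemma sub_nfree {P : FinPoset} (hP : P.NFree) (S : Set P.carrier) : (P.sub S).NFree := by
  rintro ⟨x1, x2, x3, x4, h12, h32, h34, n13, n14, n24, i13, i14, i24⟩
  exact hP ⟨x1.1, x2.1, x3.1, x4.1, Subtype.coe_lt_coe.mpr h12, Subtype.coe_lt_coe.mpr h32,
    Subtype.coe_lt_coe.mpr h34,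
    fun h => n13 (Subtype.ext h), fun h => n14 (Subtype.ext h), fun h => n24 (Subtype.ext h),
    fun h => i13 (h.imp Subtype.coe_lt_coe.mp Subtype.coe_lt_coe.mp),
    fun h => i14 (h.imp Subtype.coe_lt_coe.mp Subtype.coe_lt_coe.mp),
    fun h => i24 (h.imp Subtype.coe_lt_coe.mp Subtype.coe_lt_coe.mp)⟩

lemma sub_card_lt {P : FinPoset} {S : Set P.carrier} {x : P.carrier} (hx : x ∉ S) :
    Fintype.card (P.sub S).carrier < Fintype.card P.carrier := by
  classical
  have h1 : Fintype.card (P.sub S).carrier = Fintype.card {y // y ∈ S} :=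
    Fintype.card_congr (Equiv.refl _)
  rw [h1]
  exact Fintype.card_subtype_lt (p := fun y => y ∈ S) hx

lemma iso_seq_split (P : FinPoset) (A : Set P.carrier)
    (h : ∀ x ∈ A, ∀ y ∉ A, x < y) : ((P.sub A).seq (P.sub Aᶜ)).Iso P := by
  classical
  refine ⟨(toLex (α := (↥A ⊕ ↥Aᶜ))).symm.trans (Equiv.Set.sumCompl A), ?_⟩
  intro x y
  rcases x with a | a <;> rcases y with b | b
  · exact Iff.trans Sum.Lex.inl_lt_inl_iff Subtype.coe_lt_coe.symm
  · exact iff_of_true (Sum.Lex.inl_lt_inr a b) (h a.1 a.2 b.1 b.2)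
  · exact iff_of_false Sum.Lex.not_inr_lt_inl
      (fun hlt => lt_asymm hlt (h b.1 b.2 a.1 a.2))
  · exact Iff.trans Sum.Lex.inr_lt_inr_iff Subtype.coe_lt_coe.symm

lemma iso_par_split (P : FinPoset) (A : Set P.carrier)
    (h : ∀ x ∈ A, ∀ y ∉ A, ¬(x < y ∨ y < x)) : ((P.sub A).par (P.sub Aᶜ)).Iso P := by
  classical
  refine ⟨Equiv.Set.sumCompl A, ?_⟩
  intro x y
  rcases x with a | a <;> rcases y with b | b
  · exact Iff.trans Sum.inl_lt_inl_iff Subtype.coe_lt_coe.symm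
  · exact iff_of_false Sum.not_inl_lt_inr (fun hlt => h a.1 a.2 b.1 b.2 (Or.inl hlt))
  · exact iff_of_false Sum.not_inr_lt_inl (fun hlt => h b.1 b.2 a.1 a.2 (Or.inr hlt))
  · exact Iff.trans Sum.inr_lt_inr_iff Subtype.coe_lt_coe.symm

lemma nfree_isSP : ∀ (n : ℕ) (P : FinPoset), Fintype.card P.carrier ≤ n → P.NFree → IsSP P := by
  intro n
  induction n with
  | zero =>
    intro P hc _
    exact IsSP.empty P (Fintype.card_eq_zero_iff.mp (Nat.le_antisymm hc (Nat.zero_le _)))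
  | succ n ih =>
    intro P hc hN
    by_cases hone : Fintype.card P.carrier ≤ 1
    · rcases Nat.eq_zero_or_pos (Fintype.card P.carrier) with h0 | hp
      · exact IsSP.empty P (Fintype.card_eq_zero_iff.mp h0)
      · exact IsSP.single P (Fintype.card_pos_iff.mp hp)
          (Fintype.card_le_one_iff_subsingleton.mp hone)
    · classical
      have h2 : 2 ≤ Fintype.card P.carrier := by omega
      have hne : Nonempty P.carrier := Fintype.card_pos_iff.mp (by omega)
      obtain ⟨x0⟩ := hne
      -- minimal below, maximal above
      have hmin : ∀ x : P.carrier, ∃ m, m ≤ x ∧ ∀ y, ¬ y < m := by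
        intro x
        obtain ⟨m, hm, hmin⟩ := wellFounded_lt.has_min {y | y ≤ x} ⟨x, le_rfl⟩
        exact ⟨m, hm, fun y hy => hmin y (le_trans hy.le hm) hy⟩
      have hmax : ∀ x : P.carrier, ∃ m, x ≤ m ∧ ∀ y, ¬ m < y := by
        intro x
        obtain ⟨m, hm, hmax⟩ := wellFounded_gt.has_min {y | x ≤ y} ⟨x, le_rfl⟩
        exact ⟨m, hm, fun y hy => hmax y (le_trans hm hy.le) hy⟩
      set M : Set P.carrier := {m | ∀ y, ¬ y < m} with hM
      set B : Set P.carrier := {y | ∀ m ∈ M, m < y} with hB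
      have key1 : ∀ x ∉ B, ∀ y ∈ B, x < y := by
        intro x hx y hy
        by_contra hxy
        have hxney : x ≠ y := by rintro rfl; exact hx hy
        have hylt : ¬ y < x := fun hyx => hx (fun m hm => lt_trans (hy m hm) hyx)
        obtain ⟨m', hm'M, hm'x⟩ : ∃ m' ∈ M, ¬ m' < x := by
          by_contra hh; push_neg at hh; exact hx hh
        obtain ⟨m, hmx, hmM⟩ := hmin x
        have hmM' : m ∈ M := hmM
        have hmxlt : m < x := by
          rcases lt_or_eq_of_le hmx with h | h
          · exact h
          · exact absurd (hy x (h ▸ hmM')) hxy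
        have hm'ney : m' ≠ x := by
          rintro rfl; exact hxy (hy m' hm'M)
        refine hN ⟨m', y, m, x, hy m' hm'M, hy m hmM', hmxlt, ?_, hm'ney, fun h => hxney h.symm,
          ?_, ?_, ?_⟩
        · rintro rfl; exact hm'x hmxlt
        · exact fun h => h.elim (fun h => hmM' m' h) (fun h => hm'M m h)
        · exact fun h => h.elim hm'x (fun h => hm'M x h)
        · exact fun h => h.elim hylt hxy
      by_cases hBne : B.Nonempty
      · -- series split: Bᶜ below B
        obtain ⟨b, hb⟩ := hBne
        obtain ⟨m, _, hmM⟩ := hmin x0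
        have hmB : m ∉ B := fun hmem => lt_irrefl m (hmem m hmM)
        have hsplit : ∀ x ∈ Bᶜ, ∀ y ∉ Bᶜ, x < y := fun x hx y hy => key1 x hx y (not_not.mp hy)
        have h1 : IsSP (P.sub Bᶜ) :=
          ih _ (by have := sub_card_lt (S := Bᶜ) (not_not_intro hb); omega) (sub_nfree hN _)
        have h2 : IsSP (P.sub Bᶜᶜ) := by
          rw [compl_compl]
          exact ih _ (by have := sub_card_lt (S := B) hmB; omega) (sub_nfree hN _)
        exact IsSP.iso (IsSP.seq h1 h2) (iso_seq_split P Bᶜ hsplit)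
      · -- B empty
        have hBempty : ∀ y, y ∉ B := fun y hy => hBne ⟨y, hy⟩
        have key2 : ∀ x y : P.carrier, ¬(x < y ∨ y < x) → x ≠ y →
            ∀ m0 m1, m0 ∈ M → m1 ∈ M → m0 ≤ x → m0 ≤ y → m1 ≤ x → ¬ m1 ≤ y → False := by
          intro x y hixy hnexy m0 m1 hm0M hm1M hm0x hm0y hm1x hm1y
          have hm0x' : m0 < x := by
            rcases lt_or_eq_of_le hm0x with h | h
            · exact h
            · exfalso; rcases lt_or_eq_of_le hm0y with h2 | h2
              · exact hixy (Or.inl (h ▸ h2))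
              · exact hnexy (h.symm.trans h2)
          have hm0y' : m0 < y := by
            rcases lt_or_eq_of_le hm0y with h | h
            · exact h
            · exact absurd (Or.inr (h ▸ hm0x')) hixy
          have hm1x' : m1 < x := by
            rcases lt_or_eq_of_le hm1x with h | h
            · exact h
            · exact (hm1M m0 (h.symm ▸ hm0x')).elim
          refine hN ⟨m1, x, m0, y, hm1x', hm0x', hm0y', ?_, ?_, hnexy, ?_, ?_, hixy⟩
          · rintro rfl; exact hm1y hm0y
          · rintro rfl; exact hm1y le_rfl
          · exact fun h => h.elim (fun h => hm0M m1 h) (fun h => hm1M m0 h)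
          · exact fun h => h.elim (fun h => hm1y h.le) (fun h => hm1M y h)
        obtain ⟨u0, _, hu0max⟩ := hmax x0
        by_cases hK : ∀ m ∈ M, m ≤ u0
        · exfalso
          by_cases hu0M : u0 ∈ M
          · -- u0 both min and max: P is a singleton, contradiction with 2 ≤ card
            have hsub : ∀ x : P.carrier, x = u0 := by
              intro x
              obtain ⟨m, hmx, hmM⟩ := hmin x
              have hmu0 : m = u0 := by
                rcases lt_or_eq_of_le (hK m hmM) with h | h
                · exact absurd h (hu0M m)
                · exact h
              subst hmu0
              rcases lt_or_eq_of_le hmx with h | h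
              · exact absurd h (hu0max x)
              · exact h.symm
            have : Fintype.card P.carrier ≤ 1 :=
              Fintype.card_le_one_iff_subsingleton.mpr ⟨fun a b => (hsub a).trans (hsub b).symm⟩
            omega
          · refine hBempty u0 (fun m hm => ?_)
            rcases lt_or_eq_of_le (hK m hm) with h | h
            · exact h
            · exact absurd (h ▸ hm) hu0M
        · push_neg at hK
          obtain ⟨m', hm'M, hm'u0⟩ := hK
          set A : Set P.carrier := {x | ∀ m ∈ M, m ≤ x → m ≤ u0} with hA
          have hu0A : u0 ∈ A := fun m _ hmu0 => hmu0
          have hm'A : m' ∉ A := fun hmem => hm'u0 (hmem m' hm'M le_rfl)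
          have hclosed : ∀ x ∈ A, ∀ y ∉ A, ¬(x < y ∨ y < x) := by
            intro x hx y hy hor
            rcases hor with hlt | hlt
            · -- x < y, y ∉ A : find the N via key2 on two maximal elements
              obtain ⟨m1, hm1M, hm1y, hm1u0⟩ : ∃ m1 ∈ M, m1 ≤ y ∧ ¬ m1 ≤ u0 := by
                by_contra hh; push_neg at hh
                exact hy (fun m hm hmy => hh m hm hmy)
              obtain ⟨w, hyw, hwmax⟩ := hmax y
              obtain ⟨m0, hm0x, hm0M⟩ := hmin x
              have hm0u0 : m0 ≤ u0 := hx m0 hm0M hm0x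
              by_cases hwu0 : w = u0
              · exact hm1u0 (le_trans hm1y (hwu0 ▸ hyw))
              · have hiwu0 : ¬(w < u0 ∨ u0 < w) :=
                  fun h => h.elim (fun h => hwmax u0 h) (fun h => hu0max w h)
                exact key2 w u0 hiwu0 hwu0 m0 m1 hm0M hm1M
                  (le_trans hm0x (le_trans hlt.le hyw)) hm0u0 (le_trans hm1y hyw) hm1u0
            · -- y < x : then y ∈ A, contradiction
              exact hy (fun m hm hmy => hx m hm (le_trans hmy hlt.le))
          have h1 : IsSP (P.sub A) :=
            ih _ (by have := sub_card_lt (S := A) hm'A; omega) (sub_nfree hN _)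
          have h2 : IsSP (P.sub Aᶜ) :=
            ih _ (by have := sub_card_lt (S := Aᶜ) (not_not_intro hu0A); omega) (sub_nfree hN _)
          exact IsSP.iso (IsSP.par h1 h2) (iso_par_split P A hclosed)

theorem seriesParallel_iff_nfree (P : FinPoset) : IsSP P ↔ P.NFree := by
  constructor
  · intro h
    induction h with
    | empty P h => exact fun ⟨x1, _⟩ => h.elim x1
    | single P hne hsub =>
      rintro ⟨x1, x2, x3, x4, h12, -⟩
      exact absurd (@Subsingleton.elim _ hsub x1 x2) h12.ne
    | seq _ _ ihp ihq => exact nfree_seq ihp ihq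
    | par _ _ ihp ihq => exact nfree_par ihp ihq
    | iso _ hiso ih => exact nfree_iso hiso ih
  · exact fun h => nfree_isSP (Fintype.card P.carrier) P le_rfl h
end

section
/- In a finite N-free poset P, let a, b, c, d ∈ P be such that a is a predecessor of b, c is a predecessor of d, a < d, and c < b. Then a is a predecessor of d and c is a predecessor of b. -/
/-- A partial order is N-free if it contains no four elements whose induced order
relations are exactly `x1 < x2`, `x3 < x2`, `x3 < x4`. -/
def NFree (α : Type*) [PartialOrder α] : Prop :=
  ¬ ∃ x1 x2 x3 x4 : α,
      x1 < x2 ∧ x3 < x2 ∧ x3 < x4 ∧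
      x1 ≠ x3 ∧ x1 ≠ x4 ∧ x2 ≠ x4 ∧
      ¬ (x1 < x3 ∨ x3 < x1) ∧ ¬ (x1 < x4 ∨ x4 < x1) ∧ ¬ (x2 < x4 ∨ x4 < x2)

/-- In a finite N-free poset, if `a` is a predecessor of `b` (i.e. `a ⋖ b`),
`c` a predecessor of `d`, `a < d` and `c < b`, then `a` is a predecessor of `d`
and `c` a predecessor of `b`. -/
theorem nfree_pred_exchange {α : Type*} [Fintype α] [PartialOrder α] (hN : NFree α)
    (a b c d : α) (hab : a ⋖ b) (hcd : c ⋖ d) (had : a < d) (hcb : c < b) :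
    a ⋖ d ∧ c ⋖ b := by
  rcases eq_or_ne a c with rfl | hac
  · exact ⟨hcd, hab⟩
  rcases eq_or_ne b d with rfl | hbd
  · exact ⟨hab, hcd⟩
  have hca : ¬ c < a := fun h => hcd.2 h had
  have hac' : ¬ a < c := fun h => hab.2 h hcb
  have hdb : ¬ d < b := fun h => hab.2 had h
  have hbd' : ¬ b < d := fun h => hcd.2 hcb h
  constructor
  · refine ⟨had, fun z haz hzd => ?_⟩
    have hzb : ¬ z < b := fun h => hab.2 haz h
    have hbz : ¬ b < z := fun h => hbd' (h.trans hzd)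
    have hcz : ¬ c < z := fun h => hcd.2 h hzd
    have hzc : ¬ z < c := fun h => hac' (haz.trans h)
    exact hN ⟨z, d, c, b, hzd, hcd.1, hcb,
      fun h => by subst h; exact hac' haz,
      fun h => by subst h; exact hbd' hzd,
      fun h => hbd h.symm,
      fun h => h.elim hzc hcz,
      fun h => h.elim hzb hbz,
      fun h => h.elim hdb hbd'⟩
  · refine ⟨hcb, fun z hcz hzb => ?_⟩
    have hza : ¬ z < a := fun h => hca (hcz.trans h)
    have haz : ¬ a < z := fun h => hab.2 h hzb
    have hzd : ¬ z < d := fun h => hcd.2 hcz h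
    have hdz : ¬ d < z := fun h => hdb (h.trans hzb)
    exact hN ⟨z, b, a, d, hzb, hab.1, had,
      fun h => by subst h; exact hca hcz,
      fun h => by subst h; exact hdb hzb,
      hbd,
      fun h => h.elim hza haz,
      fun h => h.elim hzd hdz,
      fun h => h.elim hbd' hdb⟩
end

section
/- In a finite N-free poset, all predecessors of a given element have the same set of successors; equivalently, if a and a' are both predecessors of some element b, then every successor of a is a successor of a'. -/
/-- In a finite N-free poset, all predecessors of a given element have the same
successors: if `a` and `a'` are both predecessors of `b`, then every successor
of `a` is a successor of `a'`. (`x ⋖ y` means `x` is a predecessor of `y`.) -/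
theorem nfree_predecessors_same_successors {α : Type*} [Fintype α] [PartialOrder α]
    (hN : NFree α) (a a' b : α) (hab : a ⋖ b) (ha'b : a' ⋖ b) :
    ∀ s : α, a ⋖ s → a' ⋖ s := by
  intro s has
  rcases eq_or_ne a a' with rfl | hne
  · exact has
  -- a and a' are incomparable
  have hinc : ¬ (a < a' ∨ a' < a) := by
    rintro (h | h)
    · exact hab.2 h ha'b.1
    · exact ha'b.2 h hab.1
  rcases eq_or_ne s b with rfl | hsb
  · exact ha'b
  -- b and s are incomparable
  have hbs : ¬ (b < s ∨ s < b) := by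
    rintro (h | h)
    · exact has.2 hab.1 h
    · exact hab.2 has.1 h
  have ha's : a' ≠ s := by
    rintro rfl
    exact hinc (Or.inl has.1)
  -- a' < s
  have hlt : a' < s := by
    by_contra h
    have hni : ¬ (a' < s ∨ s < a') := by
      rintro (h' | h')
      · exact h h'
      · exact hinc (Or.inl (has.1.trans h'))
    exact hN ⟨a', b, a, s, ha'b.1, hab.1, has.1, hne.symm, ha's, hsb.symm,
      fun h' => hinc (h'.symm.imp id id), hni, hbs⟩
  constructor
  · exact hlt
  · intro z hz hzs
    -- a and z are incomparable
    have haz : ¬ (a < z ∨ z < a) := by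
      rintro (h | h)
      · exact has.2 h hzs
      · exact hinc (Or.inr (hz.trans h))
    have hzb : ¬ (z < b ∨ b < z) := by
      rintro (h | h)
      · exact ha'b.2 hz h
      · exact hbs (Or.inl (h.trans hzs))
    have hza : z ≠ a := fun h => hinc (Or.inr (h ▸ hz))
    have hznb : z ≠ b := fun h => hbs (Or.inl (h ▸ hzs))
    exact hN ⟨z, s, a, b, hzs, has.1, hab.1, hza, hznb, hsb,
      fun h' => haz (h'.symm.imp id id), hzb, fun h' => hbs (h'.symm.imp id id)⟩
end

section
/- In a finite N-free series-parallel poset P, two distinct good maximal parallel blocks of P cannot have the same set of minimal elements; likewise they cannot have the same set of maximal elements. -/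
variable {α : Type*} [PartialOrder α]

/-- Two elements are comparable. -/
def Comp (x y : α) : Prop := x < y ∨ y < x

/-- A block: a nonempty subset closed under intermediate elements. -/
def IsBlock (B : Set α) : Prop :=
  B.Nonempty ∧ ∀ b ∈ B, ∀ b' ∈ B, b < b' → ∀ p, b ≤ p → p ≤ b' → p ∈ B

/-- A subset `G` of `X` is good (in `X`) if every element of `X` comparable to some
element of `G` and incomparable to another element of `G` belongs to `G`. -/
def IsGoodIn (X G : Set α) : Prop :=
  ∀ p ∈ X, (∃ g ∈ G, Comp p g) → (∃ g' ∈ G, ¬ Comp p g') → p ∈ G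

/-- `R` decomposes as a parallel product of two nonempty, elementwise
incomparable (hence disjoint) parts. -/
def IsParallel (R : Set α) : Prop :=
  ∃ P1 P2 : Set α, P1.Nonempty ∧ P2.Nonempty ∧ R = P1 ∪ P2 ∧
    ∀ x ∈ P1, ∀ y ∈ P2, x ≠ y ∧ ¬ Comp x y

/-- A good maximal parallel block of `X`: a good block of `X` contained in `X`
admitting a nontrivial parallel decomposition, and maximal for parallel
extension: no good block of `X` equals `R ∥ T` with `T` nonempty. -/
def GMPB (X R : Set α) : Prop :=
  R ⊆ X ∧ IsBlock R ∧ IsGoodIn X R ∧ IsParallel R ∧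
    ¬ ∃ R' : Set α, R' ⊆ X ∧ IsBlock R' ∧ IsGoodIn X R' ∧
      ∃ T : Set α, T.Nonempty ∧ R' = R ∪ T ∧ ∀ x ∈ R, ∀ y ∈ T, x ≠ y ∧ ¬ Comp x y

/-- The minimal elements of `G`. -/
def minOf (G : Set α) : Set α := {g ∈ G | ∀ g' ∈ G, ¬ g' < g}

/-- The maximal elements of `G`. -/
def maxOf (G : Set α) : Set α := {g ∈ G | ∀ g' ∈ G, ¬ g < g'}

section Aux

variable {α : Type*} [PartialOrder α]

lemma comp_symm {x y : α} (h : Comp x y) : Comp y x := h.symm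

lemma exists_min_le [Fintype α] (S : Set α) {x : α} (hx : x ∈ S) :
    ∃ m ∈ minOf S, m ≤ x := by
  have hwf : WellFounded ((· < ·) : α → α → Prop) :=
    (Finite.to_wellFoundedLT).wf
  obtain ⟨m, ⟨hmS, hmx⟩, hmin⟩ := hwf.has_min {y | y ∈ S ∧ y ≤ x} ⟨x, hx, le_refl x⟩
  refine ⟨m, ⟨hmS, fun g' hg' hlt => ?_⟩, hmx⟩
  exact hmin g' ⟨hg', le_of_lt (lt_of_lt_of_le hlt hmx)⟩ hlt

lemma step [Fintype α] {R R' : Set α}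
    (hBR : IsBlock R) (hGR : IsGoodIn Set.univ R)
    (hmin : minOf R = minOf R') :
    ∀ x ∈ R' \ R, ∀ r ∈ R, r < x := by
  rintro x ⟨hxR', hxR⟩ r hr
  obtain ⟨m, hmMin, hmx⟩ := exists_min_le R' hxR'
  have hmR : m ∈ R := (hmin ▸ hmMin).1
  have hmltx : m < x := by
    rcases lt_or_eq_of_le hmx with h | h
    · exact h
    · exact absurd (h ▸ hmR) hxR
  have hcomp : ∀ g ∈ R, Comp x g := by
    intro g hg
    by_contra hnc
    exact hxR (hGR x (Set.mem_univ x) ⟨m, hmR, Or.inr hmltx⟩ ⟨g, hg, hnc⟩)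
  rcases hcomp r hr with h | h
  · exact absurd (hBR.2 m hmR r hr (lt_trans hmltx h) x (le_of_lt hmltx) (le_of_lt h)) hxR
  · exact h

lemma final {S S' : Set α}
    (hsub : S ⊆ S') (hP : IsParallel S') (hS : S.Nonempty)
    (hstep : ∀ x ∈ S' \ S, ∀ r ∈ S, r < x) (hne : S ≠ S') : False := by
  obtain ⟨Q1, Q2, ⟨a1, ha1⟩, ⟨a2, ha2⟩, hU, hinc⟩ := hP
  obtain ⟨r0, hr0⟩ := hS
  obtain ⟨t, htS', htS⟩ : ∃ t, t ∈ S' ∧ t ∉ S := by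
    by_contra h
    push_neg at h
    exact hne (le_antisymm hsub h)
  have hr0S' : r0 ∈ S' := hsub hr0
  rcases (hU ▸ hr0S' : r0 ∈ Q1 ∪ Q2) with hr01 | hr02
  · -- r0 ∈ Q1, take q = a2 ∈ Q2
    have hqS' : a2 ∈ S' := hU ▸ Or.inr ha2
    have hqS : a2 ∈ S := by
      by_contra hq
      exact (hinc r0 hr01 a2 ha2).2 (Or.inl (hstep a2 ⟨hqS', hq⟩ r0 hr0))
    rcases (hU ▸ htS' : t ∈ Q1 ∪ Q2) with ht1 | ht2
    · exact (hinc t ht1 a2 ha2).2 (Or.inr (hstep t ⟨htS', htS⟩ a2 hqS))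
    · exact (hinc r0 hr01 t ht2).2 (Or.inl (hstep t ⟨htS', htS⟩ r0 hr0))
  · -- r0 ∈ Q2, take q = a1 ∈ Q1
    have hqS' : a1 ∈ S' := hU ▸ Or.inl ha1
    have hqS : a1 ∈ S := by
      by_contra hq
      exact (hinc a1 ha1 r0 hr02).2 (Or.inr (hstep a1 ⟨hqS', hq⟩ r0 hr0))
    rcases (hU ▸ htS' : t ∈ Q1 ∪ Q2) with ht1 | ht2
    · exact (hinc t ht1 r0 hr02).2 (Or.inr (hstep t ⟨htS', htS⟩ r0 hr0))
    · exact (hinc a1 ha1 t ht2).2 (Or.inl (hstep t ⟨htS', htS⟩ a1 hqS))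

lemma key [Fintype α] {R R' : Set α}
    (hBR : IsBlock R) (hGR : IsGoodIn Set.univ R) (hPR : IsParallel R)
    (hBR' : IsBlock R') (hGR' : IsGoodIn Set.univ R') (hPR' : IsParallel R')
    (hmin : minOf R = minOf R') : R = R' := by
  by_contra hne
  have hRne : R.Nonempty := hBR.1
  have hR'ne : R'.Nonempty := hBR'.1
  by_cases h1 : (R' \ R).Nonempty
  · by_cases h2 : (R \ R').Nonempty
    · obtain ⟨x, hx⟩ := h1
      obtain ⟨y, hy⟩ := h2
      exact lt_asymm (step hBR hGR hmin x hx y hy.1)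
        (step hBR' hGR' hmin.symm y hy x hx.1)
    · have hsub : R ⊆ R' := by
        intro z hz
        by_contra hzR'
        exact h2 ⟨z, hz, hzR'⟩
      exact final hsub hPR' hRne (step hBR hGR hmin) hne
  · have hsub : R' ⊆ R := by
      intro z hz
      by_contra hzR
      exact h1 ⟨z, hz, hzR⟩
    exact final hsub hPR hR'ne (step hBR' hGR' hmin.symm) (fun h => hne h.symm)

lemma isBlock_dual {B : Set α} (h : IsBlock B) : IsBlock (α := αᵒᵈ) B :=
  ⟨h.1, fun b hb b' hb' hlt p hbp hpb' => h.2 b' hb' b hb hlt p hpb' hbp⟩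

lemma isGoodIn_dual {X G : Set α} (h : IsGoodIn X G) : IsGoodIn (α := αᵒᵈ) X G :=
  fun p hp hc hi =>
    h p hp (hc.imp fun g hg => ⟨hg.1, hg.2.symm⟩)
      (hi.imp fun g hg => ⟨hg.1, fun c => hg.2 c.symm⟩)

lemma isParallel_dual {R : Set α} (h : IsParallel R) : IsParallel (α := αᵒᵈ) R := by
  obtain ⟨P1, P2, h1, h2, hU, hinc⟩ := h
  exact ⟨P1, P2, h1, h2, hU, fun x hx y hy =>
    ⟨(hinc x hx y hy).1, fun c => (hinc x hx y hy).2 c.symm⟩⟩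

lemma minOf_dual (G : Set α) : minOf (α := αᵒᵈ) G = maxOf G := rfl

end Aux

/-- In a finite N-free poset `P`, two distinct good maximal parallel blocks of `P`
cannot have the same set of minimal elements, nor the same set of maximal elements. -/
theorem gmpb_min_max_determine {α : Type*} [Fintype α] [PartialOrder α] (hN : NFree α)
    (R R' : Set α) (hR : GMPB Set.univ R) (hR' : GMPB Set.univ R') (hne : R ≠ R') :
    minOf R ≠ minOf R' ∧ maxOf R ≠ maxOf R' := by
  obtain ⟨_, hBR, hGR, hPR, _⟩ := hR
  obtain ⟨_, hBR', hGR', hPR', _⟩ := hR'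
  constructor
  · intro h
    exact hne (key hBR hGR hPR hBR' hGR' hPR' h)
  · intro h
    have hBRd := isBlock_dual hBR
    have hGRd := isGoodIn_dual hGR
    have hPRd := isParallel_dual hPR
    have hBRd' := isBlock_dual hBR'
    have hGRd' := isGoodIn_dual hGR'
    have hPRd' := isParallel_dual hPR'
    have hmd := (minOf_dual R).trans (h.trans (minOf_dual R').symm)
    exact hne (@key αᵒᵈ (OrderDual.instPartialOrder α) inferInstance R R' hBRd hGRd hPRd hBRd' hGRd' hPRd' hmd)
end

section
/- Let G be a good maximal parallel block of a finite N-free poset P. Then the set of witnesses of G equals W⁻(G), or W⁺(G), or W⁻(G) ∪ W⁺(G), where W⁻(G) is the set of predecessors of the minimal elements of G and W⁺(G) is the set of successors of the maximal elements of G. -/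
variable {α : Type*} [PartialOrder α]

variable (G : Set α)

/-- The set of elements strictly below all of `G`. -/
def lowerOf : Set α := {p | ∀ g ∈ G, p < g}

/-- The set of elements strictly above all of `G`. -/
def upperOf : Set α := {p | ∀ g ∈ G, g < p}

/-- A left witness of `G`: a maximal element of `{p : p < G}` whose set of
successors (covers) is exactly the set of minimal elements of `G`. -/
def IsLeftWitness (x : α) : Prop :=
  x ∈ lowerOf G ∧ (∀ y ∈ lowerOf G, ¬ x < y) ∧ {s | x ⋖ s} = minOf G

/-- A right witness of `G`: a minimal element of `{p : G < p}` whose set of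
predecessors is exactly the set of maximal elements of `G`. -/
def IsRightWitness (x : α) : Prop :=
  x ∈ upperOf G ∧ (∀ y ∈ upperOf G, ¬ y < x) ∧ {p | p ⋖ x} = maxOf G

/-- The set of witnesses of `G`. -/
def witnesses : Set α := {x | IsLeftWitness G x} ∪ {x | IsRightWitness G x}

/-- `W⁻(G)`: the predecessors of the minimal elements of `G`. -/
def Wminus : Set α := {x | ∃ m ∈ minOf G, x ⋖ m}

/-- `W⁺(G)`: the successors of the maximal elements of `G`. -/
def Wplus : Set α := {x | ∃ m ∈ maxOf G, m ⋖ x}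

section WitnessAux

open Set

variable {β : Type*} [PartialOrder β]

/-- Elements parallel to all of `G` (and not in `G`). -/
def Cpar (G : Set β) : Set β := {p | p ∉ G ∧ ∀ g ∈ G, ¬ Comp p g}

lemma not_comp_symm {x y : β} (h : ¬ Comp x y) : ¬ Comp y x := fun h' => h (Or.symm h')

lemma nfree_elim (hN : NFree β) {a b c d : β} (hab : a < b) (hcb : c < b) (hcd : c < d)
    (h1 : a ≠ c) (h2 : a ≠ d) (h3 : b ≠ d)
    (i1 : ¬ Comp a c) (i2 : ¬ Comp a d) (i3 : ¬ Comp b d) : False :=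
  hN ⟨a, b, c, d, hab, hcb, hcd, h1, h2, h3, i1, i2, i3⟩

lemma trichotomy {G : Set β} (hG : GMPB Set.univ G) (p : β) :
    p ∈ G ∨ p ∈ lowerOf G ∨ p ∈ upperOf G ∨ p ∈ Cpar G := by
  obtain ⟨-, hblk, hgood, -, -⟩ := hG
  by_cases hpG : p ∈ G
  · exact Or.inl hpG
  by_cases hpar : ∀ g ∈ G, ¬ Comp p g
  · exact Or.inr (Or.inr (Or.inr ⟨hpG, hpar⟩))
  push_neg at hpar
  obtain ⟨g₀, hg₀, hc₀⟩ := hpar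
  have hcomp : ∀ g ∈ G, Comp p g := by
    intro g hg
    by_contra hnc
    exact hpG (hgood p (mem_univ p) ⟨g₀, hg₀, hc₀⟩ ⟨g, hg, hnc⟩)
  rcases hc₀ with hlt | hgt
  · refine Or.inr (Or.inl fun g hg => ?_)
    rcases hcomp g hg with h | h
    · exact h
    · exact absurd (hblk.2 g hg g₀ hg₀ (h.trans hlt) p h.le hlt.le) hpG
  · refine Or.inr (Or.inr (Or.inl fun g hg => ?_))
    rcases hcomp g hg with h | h
    · exact absurd (hblk.2 g₀ hg₀ g hg (hgt.trans h) p hgt.le h.le) hpG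
    · exact h

lemma minOf_nonempty [Finite β] {G : Set β} (hne : G.Nonempty) : (minOf G).Nonempty := by
  obtain ⟨m, hm, hmin⟩ := Set.Finite.exists_minimalFor id G (Set.toFinite G) hne
  exact ⟨m, hm, fun g' hg' hlt => absurd (le_antisymm hlt.le (hmin hg' hlt.le)) (ne_of_lt hlt)⟩

lemma maxOf_nonempty [Finite β] {G : Set β} (hne : G.Nonempty) : (maxOf G).Nonempty := by
  obtain ⟨m, hm, hmax⟩ := Set.Finite.exists_maximalFor id G (Set.toFinite G) hne
  exact ⟨m, hm, fun g' hg' hlt => absurd (le_antisymm hlt.le (hmax hg' hlt.le)) (ne_of_lt hlt)⟩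

/-! ### Left-side lemmas -/

lemma covby_min_of_maximal {G : Set β} (hG : GMPB Set.univ G)
    {x m : β} (hx : x ∈ lowerOf G) (hmax : ∀ a ∈ lowerOf G, ¬ x < a)
    (hm : m ∈ minOf G) : x ⋖ m := by
  refine ⟨hx m hm.1, fun z hxz hzm => ?_⟩
  have hzA : z ∈ lowerOf G := by
    rcases trichotomy hG z with hzG | h | h | h
    · exact absurd hzm (hm.2 z hzG)
    · exact h
    · exact absurd (h m hm.1) (asymm hzm)
    · exact absurd (Or.inl hzm) (h.2 m hm.1)
  exact hmax z hzA hxz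

lemma cover_mem_min_or_par {G : Set β} (hG : GMPB Set.univ G) {x s : β}
    (hx : x ∈ lowerOf G) (hmax : ∀ a ∈ lowerOf G, ¬ x < a)
    (hs : x ⋖ s) : s ∈ minOf G ∨ s ∈ Cpar G := by
  rcases trichotomy hG s with hsG | h | h | h
  · exact Or.inl ⟨hsG, fun g' hg' hlt => hs.2 (hx g' hg') hlt⟩
  · exact absurd hs.1 (hmax s h)
  · obtain ⟨g, hg⟩ := hG.2.1.1
    exact absurd (h g hg) (hs.2 (hx g hg))
  · exact Or.inr h

lemma mem_Wminus_props {G : Set β} (hG : GMPB Set.univ G) {x : β} (hx : x ∈ Wminus G) :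
    x ∈ lowerOf G ∧ ∀ a ∈ lowerOf G, ¬ x < a := by
  obtain ⟨m, hm, hxm⟩ := hx
  have hxA : x ∈ lowerOf G := by
    rcases trichotomy hG x with hxG | h | h | h
    · exact absurd hxm.1 (hm.2 x hxG)
    · exact h
    · exact absurd (h m hm.1) (asymm hxm.1)
    · exact absurd (Or.inl hxm.1) (h.2 m hm.1)
  exact ⟨hxA, fun a ha hlt => hxm.2 hlt (ha m hm.1)⟩

lemma exists_bad_cover {G : Set β} (hG : GMPB Set.univ G) {x : β}
    (hx : x ∈ lowerOf G) (hmax : ∀ a ∈ lowerOf G, ¬ x < a)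
    (hw : ¬ IsLeftWitness G x) : ∃ s, x ⋖ s ∧ s ∈ Cpar G := by
  have hne : ¬ ({s | x ⋖ s} = minOf G) := fun h => hw ⟨hx, hmax, h⟩
  have hex : ∃ s, x ⋖ s ∧ s ∉ minOf G := by
    by_contra h
    push_neg at h
    exact hne (Set.Subset.antisymm (fun s hs => h s hs)
      (fun m hm => covby_min_of_maximal hG hx hmax hm))
  obtain ⟨s, hs, hsm⟩ := hex
  rcases cover_mem_min_or_par hG hx hmax hs with h | h
  · exact absurd h hsm
  · exact ⟨s, hs, h⟩

lemma leftWitness_mem_Wminus [Finite β] {G : Set β} (hG : GMPB Set.univ G) {x : β}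
    (hw : IsLeftWitness G x) : x ∈ Wminus G := by
  obtain ⟨m, hm⟩ := minOf_nonempty (G := G) hG.2.1.1
  refine ⟨m, hm, ?_⟩
  rw [← hw.2.2] at hm
  exact hm

lemma leftWitness_of_mem_Wminus [Fintype β] {G : Set β} (hN : NFree β) (hG : GMPB Set.univ G)
    {x x' : β} (hw : IsLeftWitness G x) (hx' : x' ∈ Wminus G) : IsLeftWitness G x' := by
  obtain ⟨hx'A, hx'max⟩ := mem_Wminus_props hG hx'
  refine ⟨hx'A, hx'max, Set.Subset.antisymm ?_
    (fun m hm => covby_min_of_maximal hG hx'A hx'max hm)⟩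
  intro s hs
  by_contra hsm
  have hsC : s ∈ Cpar G := (cover_mem_min_or_par hG hx'A hx'max hs).resolve_left hsm
  by_cases hxx' : x = x'
  · subst hxx'
    exact hsm (by rw [← hw.2.2]; exact hs)
  obtain ⟨m, hm⟩ := minOf_nonempty (G := G) hG.2.1.1
  have hxA : x ∈ lowerOf G := hw.1
  have hxm : x < m := hxA m hm.1
  have hx'm : x' < m := hx'A m hm.1
  have ixx' : ¬ Comp x x' := by
    rintro (h | h)
    · exact hw.2.1 x' hx'A h
    · exact hx'max x hxA h
  have ixs : ¬ Comp x s := by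
    rintro (h | h)
    · obtain ⟨z, hz, hzs⟩ := exists_covBy_le_of_lt h
      have hzmin : z ∈ minOf G := by rw [← hw.2.2]; exact hz
      rcases lt_or_eq_of_le hzs with h' | h'
      · exact hsC.2 z hzmin.1 (Or.inr h')
      · exact hsC.1 (h' ▸ hzmin.1)
    · exact hsC.2 m hm.1 (Or.inl (h.trans hxm))
  have ims : ¬ Comp m s := fun h => hsC.2 m hm.1 (Or.symm h)
  have hxs : x ≠ s := by rintro rfl; exact hsC.2 m hm.1 (Or.inl hxm)
  have hms : m ≠ s := by rintro rfl; exact hsC.1 hm.1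
  exact nfree_elim hN hxm hx'm hs.1 hxx' hxs hms ixx' ixs ims

lemma left_main [Fintype β] {G : Set β} (hN : NFree β) (hG : GMPB Set.univ G) :
    {x | IsLeftWitness G x} = (∅ : Set β) ∨ {x | IsLeftWitness G x} = Wminus G := by
  by_cases h : {x | IsLeftWitness G x} = (∅ : Set β)
  · exact Or.inl h
  right
  obtain ⟨x, hx⟩ := Set.nonempty_iff_ne_empty.2 h
  exact Set.Subset.antisymm (fun x' hx' => leftWitness_mem_Wminus hG hx')
    (fun x' hx' => leftWitness_of_mem_Wminus hN hG hx hx')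

/-! ### Right-side lemmas (duals) -/

lemma covby_max_of_minimal {G : Set β} (hG : GMPB Set.univ G)
    {y M : β} (hy : y ∈ upperOf G) (hmin : ∀ b ∈ upperOf G, ¬ b < y)
    (hM : M ∈ maxOf G) : M ⋖ y := by
  refine ⟨hy M hM.1, fun z hMz hzy => ?_⟩
  have hzB : z ∈ upperOf G := by
    rcases trichotomy hG z with hzG | h | h | h
    · exact absurd hMz (hM.2 z hzG)
    · exact absurd (h M hM.1) (asymm hMz)
    · exact h
    · exact absurd (Or.inr hMz) (h.2 M hM.1)
  exact hmin z hzB hzy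

lemma cover_mem_max_or_par {G : Set β} (hG : GMPB Set.univ G) {y t : β}
    (hy : y ∈ upperOf G) (hmin : ∀ b ∈ upperOf G, ¬ b < y)
    (ht : t ⋖ y) : t ∈ maxOf G ∨ t ∈ Cpar G := by
  rcases trichotomy hG t with htG | h | h | h
  · exact Or.inl ⟨htG, fun g' hg' hlt => ht.2 hlt (hy g' hg')⟩
  · obtain ⟨g, hg⟩ := hG.2.1.1
    exact absurd (hy g hg) (ht.2 (h g hg))
  · exact absurd ht.1 (hmin t h)
  · exact Or.inr h

lemma mem_Wplus_props {G : Set β} (hG : GMPB Set.univ G) {y : β} (hy : y ∈ Wplus G) :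
    y ∈ upperOf G ∧ ∀ b ∈ upperOf G, ¬ b < y := by
  obtain ⟨M, hM, hMy⟩ := hy
  have hyB : y ∈ upperOf G := by
    rcases trichotomy hG y with hyG | h | h | h
    · exact absurd hMy.1 (hM.2 y hyG)
    · exact absurd (h M hM.1) (asymm hMy.1)
    · exact h
    · exact absurd (Or.inr hMy.1) (h.2 M hM.1)
  exact ⟨hyB, fun b hb hlt => hMy.2 (hb M hM.1) hlt⟩

lemma exists_bad_cover' {G : Set β} (hG : GMPB Set.univ G) {y : β}
    (hy : y ∈ upperOf G) (hmin : ∀ b ∈ upperOf G, ¬ b < y)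
    (hw : ¬ IsRightWitness G y) : ∃ t, t ⋖ y ∧ t ∈ Cpar G := by
  have hne : ¬ ({p | p ⋖ y} = maxOf G) := fun h => hw ⟨hy, hmin, h⟩
  have hex : ∃ t, t ⋖ y ∧ t ∉ maxOf G := by
    by_contra h
    push_neg at h
    exact hne (Set.Subset.antisymm (fun t ht => h t ht)
      (fun M hM => covby_max_of_minimal hG hy hmin hM))
  obtain ⟨t, ht, htm⟩ := hex
  rcases cover_mem_max_or_par hG hy hmin ht with h | h
  · exact absurd h htm
  · exact ⟨t, ht, h⟩

lemma rightWitness_mem_Wplus [Finite β] {G : Set β} (hG : GMPB Set.univ G) {y : β}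
    (hw : IsRightWitness G y) : y ∈ Wplus G := by
  obtain ⟨M, hM⟩ := maxOf_nonempty (G := G) hG.2.1.1
  refine ⟨M, hM, ?_⟩
  rw [← hw.2.2] at hM
  exact hM

lemma rightWitness_of_mem_Wplus [Fintype β] {G : Set β} (hN : NFree β) (hG : GMPB Set.univ G)
    {y y' : β} (hw : IsRightWitness G y) (hy' : y' ∈ Wplus G) : IsRightWitness G y' := by
  obtain ⟨hy'B, hy'min⟩ := mem_Wplus_props hG hy'
  refine ⟨hy'B, hy'min, Set.Subset.antisymm ?_
    (fun M hM => covby_max_of_minimal hG hy'B hy'min hM)⟩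
  intro t ht
  by_contra htm
  have htC : t ∈ Cpar G := (cover_mem_max_or_par hG hy'B hy'min ht).resolve_left htm
  by_cases hyy' : y = y'
  · subst hyy'
    exact htm (by rw [← hw.2.2]; exact ht)
  obtain ⟨M, hM⟩ := maxOf_nonempty (G := G) hG.2.1.1
  have hyB : y ∈ upperOf G := hw.1
  have hMy : M < y := hyB M hM.1
  have hMy' : M < y' := hy'B M hM.1
  have iy'y : ¬ Comp y' y := by
    rintro (h | h)
    · exact hw.2.1 y' hy'B h
    · exact hy'min y hyB h
  have ity : ¬ Comp t y := by
    rintro (h | h)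
    · obtain ⟨z, htz, hz⟩ := exists_le_covBy_of_lt h
      have hzmax : z ∈ maxOf G := by rw [← hw.2.2]; exact hz
      rcases lt_or_eq_of_le htz with h' | h'
      · exact htC.2 z hzmax.1 (Or.inl h')
      · exact htC.1 (h' ▸ hzmax.1)
    · exact htC.2 M hM.1 (Or.inr (hMy.trans h))
  have hty : t ≠ y := by rintro rfl; exact htC.2 M hM.1 (Or.inr hMy)
  have htM : t ≠ M := by rintro rfl; exact htC.1 hM.1
  exact nfree_elim hN ht.1 hMy' hMy htM hty (fun h => hyy' h.symm) (htC.2 M hM.1) ity iy'y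

lemma right_main [Fintype β] {G : Set β} (hN : NFree β) (hG : GMPB Set.univ G) :
    {x | IsRightWitness G x} = (∅ : Set β) ∨ {x | IsRightWitness G x} = Wplus G := by
  by_cases h : {x | IsRightWitness G x} = (∅ : Set β)
  · exact Or.inl h
  right
  obtain ⟨y, hy⟩ := Set.nonempty_iff_ne_empty.2 h
  exact Set.Subset.antisymm (fun y' hy' => rightWitness_mem_Wplus hG hy')
    (fun y' hy' => rightWitness_of_mem_Wplus hN hG hy hy')

end WitnessAux

section WitnessAux2

open Set

variable {β : Type*} [PartialOrder β]

lemma sandwich_false {G : Set β} (hN : NFree β) (hG : GMPB Set.univ G) {x y c : β}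
    (hx : x ∈ lowerOf G) (hxmax : ∀ a ∈ lowerOf G, ¬ x < a)
    (hy : y ∈ upperOf G) (hymin : ∀ b ∈ upperOf G, ¬ b < y)
    (hc : c ∈ Cpar G) (hxc : x < c) (hcy : c < y) : False := by
  obtain ⟨g₀, hg₀⟩ := hG.2.1.1
  set T : Set β := {c' | c' ∈ Cpar G ∧ x < c' ∧ c' < y} with hT
  apply hG.2.2.2.2
  refine ⟨G ∪ T, subset_univ _, ⟨⟨g₀, Or.inl hg₀⟩, ?_⟩, ?_, T, ⟨c, hc, hxc, hcy⟩, rfl,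
    fun g hg c' hc' => ⟨fun h => hc'.1.1 (h ▸ hg), not_comp_symm (hc'.1.2 g hg)⟩⟩
  · -- block
    rintro b (hbG | hbT) b' (hb'G | hb'T) hbb' p hbp hpb'
    · exact Or.inl (hG.2.1.2 b hbG b' hb'G hbb' p hbp hpb')
    · exact absurd (Or.inr hbb') (hb'T.1.2 b hbG)
    · exact absurd (Or.inl hbb') (hbT.1.2 b' hb'G)
    · rcases eq_or_lt_of_le hbp with rfl | hbp'
      · exact Or.inr hbT
      rcases eq_or_lt_of_le hpb' with rfl | hpb''
      · exact Or.inr hb'T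
      have hpC : p ∈ Cpar G := by
        rcases trichotomy hG p with hpG | h | h | h
        · exact absurd (Or.inl hbp') (hbT.1.2 p hpG)
        · exact absurd (Or.inl (hbp'.trans (h g₀ hg₀))) (hbT.1.2 g₀ hg₀)
        · exact absurd (Or.inr ((h g₀ hg₀).trans hpb'')) (hb'T.1.2 g₀ hg₀)
        · exact h
      exact Or.inr ⟨hpC, hbT.2.1.trans hbp', hpb''.trans hb'T.2.2⟩
  · -- goodness
    rintro p - ⟨u, hu, hcomp⟩ ⟨v, hv, hincomp⟩
    rcases trichotomy hG p with hpG | hpA | hpB | hpC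
    · exact Or.inl hpG
    · -- p below all of G
      have hvT : v ∈ T := by
        rcases hv with hvG | hvT
        · exact absurd (Or.inl (hpA v hvG)) hincomp
        · exact hvT
      have hpx : p ≠ x := by rintro rfl; exact hincomp (Or.inl hvT.2.1)
      have ipx : ¬ Comp p x := by
        rintro (h | h)
        · exact hincomp (Or.inl (h.trans hvT.2.1))
        · exact hxmax p hpA h
      have hpv : p ≠ v := by rintro rfl; exact hvT.1.2 g₀ hg₀ (Or.inl (hpA g₀ hg₀))
      have hgv : g₀ ≠ v := fun h => hvT.1.1 (h ▸ hg₀)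
      exact (nfree_elim hN (hpA g₀ hg₀) (hx g₀ hg₀) hvT.2.1 hpx hpv hgv ipx hincomp
        (not_comp_symm (hvT.1.2 g₀ hg₀))).elim
    · -- p above all of G
      have hvT : v ∈ T := by
        rcases hv with hvG | hvT
        · exact absurd (Or.inr (hpB v hvG)) hincomp
        · exact hvT
      have hpy : p ≠ y := by rintro rfl; exact hincomp (Or.inr hvT.2.2)
      have iyp : ¬ Comp y p := by
        rintro (h | h)
        · exact hincomp (Or.inr (hvT.2.2.trans h))
        · exact hymin p hpB h
      have hvg : v ≠ g₀ := fun h => hvT.1.1 (h ▸ hg₀)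
      have hvp : v ≠ p := by
        rintro rfl
        exact hvT.1.2 g₀ hg₀ (Or.inr (hpB g₀ hg₀))
      exact (nfree_elim hN hvT.2.2 (hy g₀ hg₀) (hpB g₀ hg₀) hvg hvp (fun h => hpy h.symm)
        (hvT.1.2 g₀ hg₀) (not_comp_symm hincomp) iyp).elim
    · -- p parallel to all of G
      have huT : u ∈ T := by
        rcases hu with huG | huT
        · exact absurd hcomp (hpC.2 u huG)
        · exact huT
      rcases hcomp with hpu | hup
      · -- p < u
        have hpy' : p < y := hpu.trans huT.2.2
        have hpx : p ≠ x := by rintro rfl; exact hpC.2 g₀ hg₀ (Or.inl (hx g₀ hg₀))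
        by_cases hxp : x < p
        · exact Or.inr ⟨hpC, hxp, hpy'⟩
        · have ipx : ¬ Comp p x := by
            rintro (h | h)
            · exact hpC.2 g₀ hg₀ (Or.inl (h.trans (hx g₀ hg₀)))
            · exact hxp h
          have hpg : p ≠ g₀ := fun h => hpC.1 (h ▸ hg₀)
          have hug : u ≠ g₀ := fun h => huT.1.1 (h ▸ hg₀)
          exact (nfree_elim hN hpu huT.2.1 (hx g₀ hg₀) hpx hpg hug ipx (hpC.2 g₀ hg₀)
            (huT.1.2 g₀ hg₀)).elim
      · -- u < p
        have hxp' : x < p := huT.2.1.trans hup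
        have hpy : p ≠ y := by rintro rfl; exact hpC.2 g₀ hg₀ (Or.inr (hy g₀ hg₀))
        by_cases hpy' : p < y
        · exact Or.inr ⟨hpC, hxp', hpy'⟩
        · have iyp : ¬ Comp y p := by
            rintro (h | h)
            · exact hpC.2 g₀ hg₀ (Or.inr ((hy g₀ hg₀).trans h))
            · exact hpy' h
          have hgu : g₀ ≠ u := fun h => huT.1.1 (h ▸ hg₀)
          have hgp : g₀ ≠ p := fun h => hpC.1 (h ▸ hg₀)
          exact (nfree_elim hN (hy g₀ hg₀) huT.2.2 hup hgu hgp (fun h => hpy h.symm)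
            (not_comp_symm (huT.1.2 g₀ hg₀)) (not_comp_symm (hpC.2 g₀ hg₀)) iyp).elim

lemma no_witness_contra [Fintype β] {G : Set β} (hN : NFree β) (hG : GMPB Set.univ G)
    (hA : (lowerOf G).Nonempty) (hB : (upperOf G).Nonempty)
    (hL : ∀ z, ¬ IsLeftWitness G z) (hR : ∀ z, ¬ IsRightWitness G z) : False := by
  obtain ⟨x, hxA, hxmax'⟩ := Set.Finite.exists_maximalFor id (lowerOf G) (Set.toFinite _) hA
  have hxmax : ∀ a ∈ lowerOf G, ¬ x < a := fun a ha h => (ne_of_lt h) (le_antisymm h.le (hxmax' ha h.le))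
  obtain ⟨y, hyB, hymin'⟩ := Set.Finite.exists_minimalFor id (upperOf G) (Set.toFinite _) hB
  have hymin : ∀ b ∈ upperOf G, ¬ b < y := fun b hb h => (ne_of_lt h) (le_antisymm h.le (hymin' hb h.le))
  obtain ⟨s, hxs, hsC⟩ := exists_bad_cover hG hxA hxmax (hL x)
  obtain ⟨t, hty, htC⟩ := exists_bad_cover' hG hyB hymin (hR y)
  obtain ⟨g₀, hg₀⟩ := hG.2.1.1
  have hxy : x < y := (hxA g₀ hg₀).trans (hyB g₀ hg₀)
  by_cases hsy : s < y
  · exact sandwich_false hN hG hxA hxmax hyB hymin hsC hxs.1 hsy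
  have isy : ¬ Comp s y := by
    rintro (h | h)
    · exact hsy h
    · exact hsC.2 g₀ hg₀ (Or.inr ((hyB g₀ hg₀).trans h))
  by_cases hxt : x < t
  · exact sandwich_false hN hG hxA hxmax hyB hymin htC hxt hty.1
  have itx : ¬ Comp t x := by
    rintro (h | h)
    · exact htC.2 g₀ hg₀ (Or.inl (h.trans (hxA g₀ hg₀)))
    · exact hxt h
  by_cases hst : Comp s t
  · rcases hst with h | h
    · exact hsy (h.trans hty.1)
    · have h1 : g₀ ≠ t := by rintro rfl; exact htC.1 hg₀
      have h2 : g₀ ≠ s := by rintro rfl; exact hsC.1 hg₀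
      have h3 : y ≠ s := by rintro rfl; exact hsC.2 g₀ hg₀ (Or.inr (hyB g₀ hg₀))
      exact nfree_elim hN (hyB g₀ hg₀) hty.1 h h1 h2 h3
        (not_comp_symm (htC.2 g₀ hg₀)) (not_comp_symm (hsC.2 g₀ hg₀)) (not_comp_symm isy)
  · have h1 : t ≠ x := by rintro rfl; exact htC.2 g₀ hg₀ (Or.inl (hxA g₀ hg₀))
    have h2 : t ≠ s := by rintro rfl; exact hsy hty.1
    have h3 : y ≠ s := by rintro rfl; exact hsC.2 g₀ hg₀ (Or.inr (hyB g₀ hg₀))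
    exact nfree_elim hN hty.1 hxy hxs.1 h1 h2 h3 itx (not_comp_symm hst) (not_comp_symm isy)

end WitnessAux2

/-- For a good maximal parallel block `G` of a finite N-free poset, the set of
witnesses of `G` equals `W⁻(G)`, or `W⁺(G)`, or `W⁻(G) ∪ W⁺(G)`. -/
theorem witnesses_eq_Wminus_or_Wplus {α : Type*} [Fintype α] [PartialOrder α]
    (hN : NFree α) (G : Set α) (hG : GMPB Set.univ G) :
    witnesses G = Wminus G ∨ witnesses G = Wplus G ∨ witnesses G = Wminus G ∪ Wplus G := by
  rcases left_main hN hG with hLe | hLW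
  · rcases right_main hN hG with hRe | hRW
    · by_cases hA : (lowerOf G).Nonempty
      · by_cases hB : (upperOf G).Nonempty
        · exact (no_witness_contra hN hG hA hB
            (fun z hz => Set.eq_empty_iff_forall_notMem.1 hLe z hz)
            (fun z hz => Set.eq_empty_iff_forall_notMem.1 hRe z hz)).elim
        · right; left
          have hW : Wplus G = (∅ : Set α) :=
            Set.eq_empty_iff_forall_notMem.2 fun z hz => hB ⟨z, (mem_Wplus_props hG hz).1⟩
          unfold witnesses
          rw [hLe, hRe, hW, Set.union_empty]
      · left
        have hW : Wminus G = (∅ : Set α) :=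
          Set.eq_empty_iff_forall_notMem.2 fun z hz => hA ⟨z, (mem_Wminus_props hG hz).1⟩
        unfold witnesses
        rw [hLe, hRe, hW, Set.union_empty]
    · right; left
      unfold witnesses
      rw [hLe, hRW, Set.empty_union]
  · rcases right_main hN hG with hRe | hRW
    · left
      unfold witnesses
      rw [hLW, hRe, Set.union_empty]
    · right; right
      unfold witnesses
      rw [hLW, hRW]
end

section
/- Every good maximal parallel block G of a finite N-free poset P with G ≠ P has at least one witness. -/
variable {α : Type*} [PartialOrder α]

variable (G : Set α)

section AuxWitness

lemma nComp_symm {x y : α} (h : ¬ Comp x y) : ¬ Comp y x := fun hc => h hc.symm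

lemma classify (hG : GMPB Set.univ G) {p : α} (hp : p ∉ G) :
    p ∈ lowerOf G ∨ p ∈ upperOf G ∨ ∀ g ∈ G, ¬ Comp p g := by
  obtain ⟨-, ⟨hGne, hclosed⟩, hgood, -, -⟩ := hG
  by_cases h1 : ∃ g ∈ G, Comp p g
  · by_cases h2 : ∃ g ∈ G, ¬ Comp p g
    · exact absurd (hgood p trivial h1 h2) hp
    · push_neg at h2
      by_cases h3 : ∃ g ∈ G, g < p
      · refine Or.inr (Or.inl ?_)
        intro g hg
        rcases h2 g hg with hlt | hlt
        · obtain ⟨g0, hg0, hg0p⟩ := h3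
          exact absurd (hclosed g0 hg0 g hg (hg0p.trans hlt) p hg0p.le hlt.le) hp
        · exact hlt
      · push_neg at h3
        refine Or.inl ?_
        intro g hg
        rcases h2 g hg with hlt | hlt
        · exact hlt
        · exact absurd hlt (h3 g hg)
  · push_neg at h1
    exact Or.inr (Or.inr h1)

/-- The set of elements incomparable to all of `G` but sandwiched between
`lowerOf G` and `upperOf G`. -/
def Tset : Set α :=
  {t | t ∉ G ∧ (∀ g ∈ G, ¬ Comp t g) ∧ (∀ l ∈ lowerOf G, l < t) ∧ (∀ u ∈ upperOf G, t < u)}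

lemma Tset_empty (hN : NFree α) (hG : GMPB Set.univ G) : Tset G = ∅ := by
  by_contra hTne
  obtain ⟨t0, ht0⟩ := Set.nonempty_iff_ne_empty.mpr hTne
  obtain ⟨m1, hm1⟩ := hG.2.1.1
  have hclosed := hG.2.1.2
  refine hG.2.2.2.2 ⟨G ∪ Tset G, Set.subset_univ _, ?_, ?_, Tset G, ⟨t0, ht0⟩, rfl, ?_⟩
  · -- IsBlock
    refine ⟨⟨m1, Or.inl hm1⟩, ?_⟩
    intro b hb b' hb' hbb' p hbp hpb'
    rcases hb with hbG | hbT
    · rcases hb' with hb'G | hb'T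
      · exact Or.inl (hclosed b hbG b' hb'G hbb' p hbp hpb')
      · exact absurd (Or.inr hbb') (hb'T.2.1 b hbG)
    · rcases hb' with hb'G | hb'T
      · exact absurd (Or.inl hbb') (hbT.2.1 b' hb'G)
      · rcases hbp.lt_or_eq with hbp' | heq
        · rcases hpb'.lt_or_eq with hpb'' | heq2
          · have hpG : p ∉ G := fun hpG => hbT.2.1 p hpG (Or.inl hbp')
            have hppar : ∀ g ∈ G, ¬ Comp p g := by
              rcases classify G hG hpG with h | h | h
              · exact absurd (Or.inl (hbp'.trans (h m1 hm1))) (hbT.2.1 m1 hm1)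
              · exact absurd (Or.inr ((h m1 hm1).trans hpb'')) (hb'T.2.1 m1 hm1)
              · exact h
            exact Or.inr ⟨hpG, hppar, fun l hl => (hbT.2.2.1 l hl).trans hbp',
              fun u hu => hpb''.trans (hb'T.2.2.2 u hu)⟩
          · exact heq2 ▸ Or.inr hb'T
        · exact heq ▸ Or.inr hbT
  · -- IsGoodIn
    intro q _ hcomp hincomp
    by_contra hq
    have hqG : q ∉ G := fun h => hq (Or.inl h)
    have hqT : q ∉ Tset G := fun h => hq (Or.inr h)
    obtain ⟨r', hr', hqr'⟩ := hincomp
    obtain ⟨r, hr, hqr⟩ := hcomp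
    rcases classify G hG hqG with h | h | h
    · rcases hr' with h1 | h1
      · exact hqr' (Or.inl (h r' h1))
      · exact hqr' (Or.inl (h1.2.2.1 q h))
    · rcases hr' with h1 | h1
      · exact hqr' (Or.inr (h r' h1))
      · exact hqr' (Or.inr (h1.2.2.2 q h))
    · have hrT : r ∈ Tset G := by
        rcases hr with h1 | h1
        · exact absurd hqr (h r h1)
        · exact h1
      rcases hqr with hqr | hqr
      · -- q < r
        refine hqT ⟨hqG, h, ?_, fun u hu => hqr.trans (hrT.2.2.2 u hu)⟩
        intro l hl
        by_contra hlq
        have hql : ¬ q < l := fun hc => h m1 hm1 (Or.inl (hc.trans (hl m1 hm1)))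
        have hneql : q ≠ l := by rintro rfl; exact h m1 hm1 (Or.inl (hl m1 hm1))
        exact hN ⟨q, r, l, m1, hqr, hrT.2.2.1 l hl, hl m1 hm1,
          hneql, (by rintro rfl; exact hqG hm1 : q ≠ m1),
          (by rintro rfl; exact hrT.1 hm1 : r ≠ m1),
          fun hc => hc.elim hql hlq, h m1 hm1, hrT.2.1 m1 hm1⟩
      · -- r < q
        refine hqT ⟨hqG, h, fun l hl => (hrT.2.2.1 l hl).trans hqr, ?_⟩
        intro u hu
        by_contra hqu
        have huq : ¬ u < q := fun hc => h m1 hm1 (Or.inr ((hu m1 hm1).trans hc))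
        have hnequ : u ≠ q := by rintro rfl; exact h m1 hm1 (Or.inr (hu m1 hm1))
        exact hN ⟨m1, u, r, q, hu m1 hm1, hrT.2.2.2 u hu, hqr,
          (by rintro rfl; exact hrT.1 hm1 : m1 ≠ r),
          (by rintro rfl; exact hqG hm1 : m1 ≠ q), hnequ,
          nComp_symm (hrT.2.1 m1 hm1), nComp_symm (h m1 hm1),
          fun hc => hc.elim huq hqu⟩
  · -- incomparability condition
    intro a ha b hb
    exact ⟨fun he => hb.1 (he ▸ ha), nComp_symm (hb.2.1 a ha)⟩

lemma cov_min (hG : GMPB Set.univ G) {x : α} (hxl : x ∈ lowerOf G)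
    (hxmax : ∀ y ∈ lowerOf G, ¬ x < y) {m : α} (hm : m ∈ minOf G) : x ⋖ m := by
  refine ⟨hxl m hm.1, fun c hxc hcm => ?_⟩
  by_cases hcG : c ∈ G
  · exact hm.2 c hcG hcm
  · rcases classify G hG hcG with h | h | h
    · exact hxmax c h hxc
    · exact absurd hcm (asymm (h m hm.1))
    · exact h m hm.1 (Or.inl hcm)

lemma cov_max (hG : GMPB Set.univ G) {y : α} (hyu : y ∈ upperOf G)
    (hymin : ∀ z ∈ upperOf G, ¬ z < y) {M : α} (hM : M ∈ maxOf G) : M ⋖ y := by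
  refine ⟨hyu M hM.1, fun c hMc hcy => ?_⟩
  by_cases hcG : c ∈ G
  · exact hM.2 c hcG hMc
  · rcases classify G hG hcG with h | h | h
    · exact absurd hMc (asymm (h M hM.1))
    · exact hymin c h hcy
    · exact h M hM.1 (Or.inr hMc)

lemma badLeft (hG : GMPB Set.univ G) {x : α} (hxl : x ∈ lowerOf G)
    (hxmax : ∀ y ∈ lowerOf G, ¬ x < y) (hnw : ¬ IsLeftWitness G x) :
    ∃ s, x ⋖ s ∧ s ∉ G ∧ ∀ g ∈ G, ¬ Comp s g := by
  have hsub : minOf G ⊆ {s | x ⋖ s} := fun m hm => cov_min G hG hxl hxmax hm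
  have hns : ¬ {s | x ⋖ s} ⊆ minOf G :=
    fun h => hnw ⟨hxl, hxmax, Set.Subset.antisymm h hsub⟩
  obtain ⟨s, hcov, hsm⟩ := Set.not_subset.mp hns
  have hcov : x ⋖ s := hcov
  have hsG : s ∉ G := by
    intro hsG
    exact hsm ⟨hsG, fun g hg hgs => hcov.2 (hxl g hg) hgs⟩
  rcases classify G hG hsG with h | h | h
  · exact absurd hcov.1 (hxmax s h)
  · obtain ⟨m1, hm1⟩ := hG.2.1.1
    exact absurd (h m1 hm1) (hcov.2 (hxl m1 hm1))
  · exact ⟨s, hcov, hsG, h⟩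

lemma badRight (hG : GMPB Set.univ G) {y : α} (hyu : y ∈ upperOf G)
    (hymin : ∀ z ∈ upperOf G, ¬ z < y) (hnw : ¬ IsRightWitness G y) :
    ∃ s', s' ⋖ y ∧ s' ∉ G ∧ ∀ g ∈ G, ¬ Comp s' g := by
  have hsub : maxOf G ⊆ {p | p ⋖ y} := fun M hM => cov_max G hG hyu hymin hM
  have hns : ¬ {p | p ⋖ y} ⊆ maxOf G :=
    fun h => hnw ⟨hyu, hymin, Set.Subset.antisymm h hsub⟩
  obtain ⟨s', hcov, hsm⟩ := Set.not_subset.mp hns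
  have hcov : s' ⋖ y := hcov
  have hsG : s' ∉ G := by
    intro hsG
    exact hsm ⟨hsG, fun g hg hsg => hcov.2 hsg (hyu g hg)⟩
  rcases classify G hG hsG with h | h | h
  · obtain ⟨m1, hm1⟩ := hG.2.1.1
    exact absurd (hyu m1 hm1) (hcov.2 (h m1 hm1))
  · exact absurd hcov.1 (hymin s' h)
  · exact ⟨s', hcov, hsG, h⟩

lemma lower_lt_bad (hN : NFree α) (hG : GMPB Set.univ G) {x s : α}
    (hxl : x ∈ lowerOf G) (hxmax : ∀ y ∈ lowerOf G, ¬ x < y)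
    (hcov : x ⋖ s) (hsG : s ∉ G) (hpar : ∀ g ∈ G, ¬ Comp s g) :
    ∀ l ∈ lowerOf G, l < s := by
  obtain ⟨m1, hm1⟩ := hG.2.1.1
  intro l hl
  by_contra hls
  have hsl : ¬ s < l := fun h => hpar m1 hm1 (Or.inl (h.trans (hl m1 hm1)))
  have hlx : ¬ Comp l x := by
    rintro (h | h)
    · exact hls (h.trans hcov.1)
    · exact hxmax l hl h
  exact hN ⟨l, m1, x, s, hl m1 hm1, hxl m1 hm1, hcov.1,
    (by rintro rfl; exact hls hcov.1 : l ≠ x),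
    (by rintro rfl; exact hpar m1 hm1 (Or.inl (hl m1 hm1)) : l ≠ s),
    (by rintro rfl; exact hsG hm1 : m1 ≠ s),
    hlx, fun hc => hc.elim hls hsl, nComp_symm (hpar m1 hm1)⟩

lemma upper_gt_bad (hN : NFree α) (hG : GMPB Set.univ G) {y s' : α}
    (hyu : y ∈ upperOf G) (hymin : ∀ z ∈ upperOf G, ¬ z < y)
    (hcov : s' ⋖ y) (hsG : s' ∉ G) (hpar : ∀ g ∈ G, ¬ Comp s' g) :
    ∀ u ∈ upperOf G, s' < u := by
  obtain ⟨m1, hm1⟩ := hG.2.1.1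
  intro u hu
  by_contra hsu
  have hus : ¬ u < s' := fun hc => hpar m1 hm1 (Or.inr ((hu m1 hm1).trans hc))
  have hyune : ¬ Comp y u := by
    rintro (hc | hc)
    · exact hsu (hcov.1.trans hc)
    · exact hymin u hu hc
  exact hN ⟨s', y, m1, u, hcov.1, hyu m1 hm1, hu m1 hm1,
    (by rintro rfl; exact hsG hm1 : s' ≠ m1),
    (by rintro rfl; exact hpar m1 hm1 (Or.inr (hu m1 hm1)) : s' ≠ u),
    (by rintro rfl; exact hsu hcov.1 : y ≠ u),
    hpar m1 hm1, fun hc => hc.elim hsu hus, hyune⟩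

end AuxWitness

/-- Every good maximal parallel block `G` of a finite N-free poset `P` with `G ≠ P`
has at least one witness. -/
theorem gmpb_has_witness {α : Type*} [Fintype α] [PartialOrder α]
    (hN : NFree α) (G : Set α) (hG : GMPB Set.univ G) (hne : G ≠ Set.univ) :
    ∃ x : α, x ∈ witnesses G := by
  by_contra hw
  push_neg at hw
  have hnlw : ∀ x, ¬ IsLeftWitness G x := fun x h => hw x (Or.inl h)
  have hnrw : ∀ x, ¬ IsRightWitness G x := fun x h => hw x (Or.inr h)
  obtain ⟨m1, hm1⟩ := hG.2.1.1
  have hT := Tset_empty G hN hG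
  have hstep1 : (lowerOf G).Nonempty ∨ (upperOf G).Nonempty := by
    by_contra hno
    obtain ⟨p0, hp0⟩ := (Set.ne_univ_iff_exists_notMem G).mp hne
    refine hG.2.2.2.2 ⟨Set.univ, subset_rfl,
      ⟨⟨m1, trivial⟩, fun _ _ _ _ _ _ _ _ => trivial⟩,
      fun _ _ _ _ => trivial, Gᶜ, ⟨p0, hp0⟩, (Set.union_compl_self G).symm, ?_⟩
    intro a ha b hb
    have hbG : b ∉ G := hb
    have hbpar : ∀ g ∈ G, ¬ Comp b g := by
      rcases classify G hG hbG with h | h | h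
      · exact absurd (Or.inl ⟨b, h⟩ : (lowerOf G).Nonempty ∨ (upperOf G).Nonempty) hno
      · exact absurd (Or.inr ⟨b, h⟩ : (lowerOf G).Nonempty ∨ (upperOf G).Nonempty) hno
      · exact h
    exact ⟨fun he => hbG (he ▸ ha), nComp_symm (hbpar a ha)⟩
  by_cases hLow : (lowerOf G).Nonempty
  · obtain ⟨x, hxl, hxmax'⟩ :=
      Set.Finite.exists_maximalFor id (lowerOf G) (Set.toFinite _) hLow
    have hxmax : ∀ y ∈ lowerOf G, ¬ x < y := fun y hy hxy => hxy.not_ge (hxmax' hy hxy.le)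
    obtain ⟨s, hcov, hsG, hspar⟩ := badLeft G hG hxl hxmax (hnlw x)
    have hall : ∀ l ∈ lowerOf G, l < s := lower_lt_bad G hN hG hxl hxmax hcov hsG hspar
    have hsnT : s ∉ Tset G := by rw [hT]; exact Set.notMem_empty s
    have hexu : ∃ u ∈ upperOf G, ¬ s < u := by
      by_contra hc; push_neg at hc; exact hsnT ⟨hsG, hspar, hall, hc⟩
    obtain ⟨u', hu', hsu'⟩ := hexu
    obtain ⟨y, hyS, hymin'⟩ :=
      Set.Finite.exists_minimalFor id {z ∈ upperOf G | z ≤ u'} (Set.toFinite _)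
        ⟨u', hu', le_rfl⟩
    obtain ⟨hyu, hyle⟩ := hyS
    have hymin : ∀ z ∈ upperOf G, ¬ z < y := fun z hz hzy =>
      hzy.not_ge (hymin' ⟨hz, hzy.le.trans hyle⟩ hzy.le)
    have hsy : ¬ s < y := fun hc => hsu' (hc.trans_le hyle)
    have hys : ¬ y < s := fun hc => hcov.2 ((hxl m1 hm1).trans (hyu m1 hm1)) hc
    have hyne : y ≠ s := by
      rintro rfl
      rcases hyle.lt_or_eq with h | rfl
      · exact hsu' h
      · exact hspar m1 hm1 (Or.inr (hu' m1 hm1))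
    obtain ⟨s', hcov', hs'G, hs'par⟩ := badRight G hG hyu hymin (hnrw y)
    have hall' : ∀ u ∈ upperOf G, s' < u :=
      upper_gt_bad G hN hG hyu hymin hcov' hs'G hs'par
    have hs'nT : s' ∉ Tset G := by rw [hT]; exact Set.notMem_empty s'
    have hexl : ∃ l ∈ lowerOf G, ¬ l < s' := by
      by_contra hc; push_neg at hc; exact hs'nT ⟨hs'G, hs'par, hc, hall'⟩
    obtain ⟨l', hl', hl's'⟩ := hexl
    have hs'l' : ¬ s' < l' := fun hc => hs'par m1 hm1 (Or.inl (hc.trans (hl' m1 hm1)))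
    by_cases hss : Comp s s'
    · rcases hss with h | h
      · exact hsu' (h.trans (hall' u' hu'))
      · exact hN ⟨m1, y, s', s, hyu m1 hm1, hcov'.1, h,
          (by rintro rfl; exact hs'G hm1 : m1 ≠ s'),
          (by rintro rfl; exact hsG hm1 : m1 ≠ s), hyne,
          nComp_symm (hs'par m1 hm1), nComp_symm (hspar m1 hm1),
          fun hc => hc.elim hys hsy⟩
    · exact hN ⟨s', y, l', s, hcov'.1, (hl' m1 hm1).trans (hyu m1 hm1), hall l' hl',
        (by rintro rfl; exact hs'par m1 hm1 (Or.inl (hl' m1 hm1)) : s' ≠ l'),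
        (by rintro rfl; exact hsy hcov'.1 : s' ≠ s), hyne,
        fun hc => hc.elim hs'l' hl's', fun hc => hss hc.symm,
        fun hc => hc.elim hys hsy⟩
  · rcases hstep1 with h | hUp
    · exact absurd h hLow
    obtain ⟨y, hyu, hymin'⟩ :=
      Set.Finite.exists_minimalFor id (upperOf G) (Set.toFinite _) hUp
    have hymin : ∀ z ∈ upperOf G, ¬ z < y := fun z hz hzy => hzy.not_ge (hymin' hz hzy.le)
    obtain ⟨s', hcov', hs'G, hs'par⟩ := badRight G hG hyu hymin (hnrw y)
    have hall' : ∀ u ∈ upperOf G, s' < u :=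
      upper_gt_bad G hN hG hyu hymin hcov' hs'G hs'par
    have hmem : s' ∈ Tset G := ⟨hs'G, hs'par, fun l hl => absurd ⟨l, hl⟩ hLow, hall'⟩
    rw [hT] at hmem
    exact hmem
end

section
/- In a finite N-free poset P, every element x ∈ P is a left witness of at most one good maximal parallel block of P, and similarly a right witness of at most one good maximal parallel block of P. -/
variable {α : Type*} [PartialOrder α]

variable (G : Set α)

section MyAux

variable {α₀ : Type*} [PartialOrder α₀]

lemma my_exists_min_le [Finite α₀] {G : Set α₀} {g : α₀} (hg : g ∈ G) :
    ∃ m ∈ minOf G, m ≤ g := by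
  obtain ⟨m, ⟨hmG, hmg⟩, hmin⟩ :=
    (Finite.to_wellFoundedLT (α := α₀)).wf.has_min {a | a ∈ G ∧ a ≤ g} ⟨g, hg, le_refl g⟩
  exact ⟨m, ⟨hmG, fun g' hg' hlt => hmin g' ⟨hg', (hlt.le.trans hmg)⟩ hlt⟩, hmg⟩

lemma my_exists_max_ge [Finite α₀] {G : Set α₀} {g : α₀} (hg : g ∈ G) :
    ∃ m ∈ maxOf G, g ≤ m := by
  obtain ⟨m, ⟨hmG, hmg⟩, hmin⟩ :=
    (Finite.to_wellFoundedGT (α := α₀)).wf.has_min {a | a ∈ G ∧ g ≤ a} ⟨g, hg, le_refl g⟩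
  exact ⟨m, ⟨hmG, fun g' hg' hlt => hmin g' ⟨hg', (hmg.trans hlt.le)⟩ hlt⟩, hmg⟩

lemma my_above_all [Finite α₀] {G G' : Set α₀} (hB' : IsBlock G')
    (hgood' : IsGoodIn Set.univ G') (hmin : minOf G ⊆ G')
    {g : α₀} (hg : g ∈ G) (hgn : g ∉ G') : ∀ c ∈ G', c < g := by
  obtain ⟨m, hmMin, hmle⟩ := my_exists_min_le hg
  have hmG' : m ∈ G' := hmin hmMin
  have hmlt : m < g := hmle.lt_of_ne (by rintro rfl; exact hgn hmG')
  intro c hc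
  have hcomp : Comp g c := by
    by_contra hnc
    exact hgn (hgood' g (Set.mem_univ g) ⟨m, hmG', Or.inr hmlt⟩ ⟨c, hc, hnc⟩)
  rcases hcomp with h | h
  · exact absurd (hB'.2 m hmG' c hc (hmlt.trans h) g hmle h.le) hgn
  · exact h

lemma my_below_all [Finite α₀] {G G' : Set α₀} (hB' : IsBlock G')
    (hgood' : IsGoodIn Set.univ G') (hmax : maxOf G ⊆ G')
    {g : α₀} (hg : g ∈ G) (hgn : g ∉ G') : ∀ c ∈ G', g < c := by
  obtain ⟨m, hmMax, hmge⟩ := my_exists_max_ge hg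
  have hmG' : m ∈ G' := hmax hmMax
  have hmlt : g < m := hmge.lt_of_ne (by rintro rfl; exact hgn hmG')
  intro c hc
  have hcomp : Comp g c := by
    by_contra hnc
    exact hgn (hgood' g (Set.mem_univ g) ⟨m, hmG', Or.inl hmlt⟩ ⟨c, hc, hnc⟩)
  rcases hcomp with h | h
  · exact h
  · exact absurd (hB'.2 c hc m hmG' (h.trans hmlt) g h.le hmge) hgn

lemma my_subset_of_comp {G G' : Set α₀} (hne' : G'.Nonempty) (hsub : G' ⊆ G)
    (hpar : IsParallel G)
    (H : ∀ t ∈ G, t ∉ G' → ∀ c ∈ G', Comp c t) : G ⊆ G' := by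
  obtain ⟨P1, P2, h1, h2, hun, hinc⟩ := hpar
  intro g hg
  by_contra hgn
  have key : ∀ (Q1 Q2 : Set α₀), Q2.Nonempty → G = Q1 ∪ Q2 →
      (∀ x ∈ Q1, ∀ y ∈ Q2, x ≠ y ∧ ¬ Comp x y) → g ∈ Q1 → False := by
    intro Q1 Q2 hQ2 hQun hQinc hgQ
    have hG'Q1 : ∀ c ∈ G', c ∈ Q1 := by
      intro c hc
      have hclt : Comp c g := H g hg hgn c hc
      have hcG : c ∈ Q1 ∪ Q2 := by rw [← hQun]; exact hsub hc
      rcases hcG with h | h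
      · exact h
      · exact absurd hclt.symm (hQinc g hgQ c h).2
    obtain ⟨p, hp⟩ := hQ2
    have hpG : p ∈ G := by rw [hQun]; exact Or.inr hp
    have hpn : p ∉ G' := fun h => (hQinc p (hG'Q1 p h) p hp).1 rfl
    obtain ⟨c, hc⟩ := hne'
    exact (hQinc c (hG'Q1 c hc) p hp).2 (H p hpG hpn c hc)
  have hgun : g ∈ P1 ∪ P2 := by rw [← hun]; exact hg
  rcases hgun with h | h
  · exact absurd (key P1 P2 h2 hun hinc h) not_false
  · refine absurd (key P2 P1 h1 (hun.trans (Set.union_comm _ _)) ?_ h) not_false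
    intro a ha b hb
    exact ⟨(hinc b hb a ha).1.symm, fun hc => (hinc b hb a ha).2 hc.symm⟩

lemma my_eq_of_min [Finite α₀] {G G' : Set α₀}
    (hBG : IsBlock G) (hgG : IsGoodIn Set.univ G) (hpG : IsParallel G)
    (hBG' : IsBlock G') (hgG' : IsGoodIn Set.univ G') (hpG' : IsParallel G')
    (hmin : minOf G = minOf G') : G = G' := by
  have hminG' : minOf G ⊆ G' := by intro m hm; rw [hmin] at hm; exact hm.1
  have hminG : minOf G' ⊆ G := by intro m hm; rw [← hmin] at hm; exact hm.1
  have h1 : ∀ g ∈ G, g ∉ G' → ∀ c ∈ G', c < g :=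
    fun g hg hgn => my_above_all hBG' hgG' hminG' hg hgn
  have h2 : ∀ g ∈ G', g ∉ G → ∀ c ∈ G, c < g :=
    fun g hg hgn => my_above_all hBG hgG hminG hg hgn
  by_cases hc1 : ∃ g, g ∈ G ∧ g ∉ G'
  · obtain ⟨g, hg, hgn⟩ := hc1
    by_cases hc2 : ∃ g', g' ∈ G' ∧ g' ∉ G
    · obtain ⟨g', hg', hgn'⟩ := hc2
      exact absurd (h1 g hg hgn g' hg') (asymm (h2 g' hg' hgn' g hg))
    · have hsub : G' ⊆ G := fun a ha => not_not.mp (fun h => hc2 ⟨a, ha, h⟩)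
      exact (my_subset_of_comp hBG'.1 hsub hpG
        (fun t ht htn c hc => Or.inl (h1 t ht htn c hc))).antisymm hsub
  · have hsub : G ⊆ G' := fun a ha => not_not.mp (fun h => hc1 ⟨a, ha, h⟩)
    exact hsub.antisymm (my_subset_of_comp hBG.1 hsub hpG'
      (fun t ht htn c hc => Or.inl (h2 t ht htn c hc)))

lemma my_eq_of_max [Finite α₀] {G G' : Set α₀}
    (hBG : IsBlock G) (hgG : IsGoodIn Set.univ G) (hpG : IsParallel G)
    (hBG' : IsBlock G') (hgG' : IsGoodIn Set.univ G') (hpG' : IsParallel G')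
    (hmax : maxOf G = maxOf G') : G = G' := by
  have hmaxG' : maxOf G ⊆ G' := by intro m hm; rw [hmax] at hm; exact hm.1
  have hmaxG : maxOf G' ⊆ G := by intro m hm; rw [← hmax] at hm; exact hm.1
  have h1 : ∀ g ∈ G, g ∉ G' → ∀ c ∈ G', g < c :=
    fun g hg hgn => my_below_all hBG' hgG' hmaxG' hg hgn
  have h2 : ∀ g ∈ G', g ∉ G → ∀ c ∈ G, g < c :=
    fun g hg hgn => my_below_all hBG hgG hmaxG hg hgn
  by_cases hc1 : ∃ g, g ∈ G ∧ g ∉ G'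
  · obtain ⟨g, hg, hgn⟩ := hc1
    by_cases hc2 : ∃ g', g' ∈ G' ∧ g' ∉ G
    · obtain ⟨g', hg', hgn'⟩ := hc2
      exact absurd (h1 g hg hgn g' hg') (asymm (h2 g' hg' hgn' g hg))
    · have hsub : G' ⊆ G := fun a ha => not_not.mp (fun h => hc2 ⟨a, ha, h⟩)
      exact (my_subset_of_comp hBG'.1 hsub hpG
        (fun t ht htn c hc => Or.inr (h1 t ht htn c hc))).antisymm hsub
  · have hsub : G ⊆ G' := fun a ha => not_not.mp (fun h => hc1 ⟨a, ha, h⟩)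
    exact hsub.antisymm (my_subset_of_comp hBG.1 hsub hpG'
      (fun t ht htn c hc => Or.inr (h2 t ht htn c hc)))

end MyAux

/-- In a finite N-free poset, every element is a left witness of at most one good
maximal parallel block, and a right witness of at most one good maximal parallel
block. -/
theorem witness_unique_gmpb {α : Type*} [Fintype α] [PartialOrder α]
    (hN : NFree α) (x : α) (G G' : Set α)
    (hG : GMPB Set.univ G) (hG' : GMPB Set.univ G') :
    (IsLeftWitness G x → IsLeftWitness G' x → G = G') ∧
    (IsRightWitness G x → IsRightWitness G' x → G = G') := by
  obtain ⟨-, hBG, hgG, hpG, -⟩ := hG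
  obtain ⟨-, hBG', hgG', hpG', -⟩ := hG'
  constructor
  · intro hx hx'
    exact my_eq_of_min hBG hgG hpG hBG' hgG' hpG' (hx.2.2.symm.trans hx'.2.2)
  · intro hx hx'
    exact my_eq_of_max hBG hgG hpG hBG' hgG' hpG' (hx.2.2.symm.trans hx'.2.2)
end

section
/- If X and Y are semi-linear subsets of ℕ^n, then the quotient Y / X = { z ∈ ℕ^n : ∃ x ∈ X, z + x ∈ Y } is semi-linear. -/
/-- A subset of `ℕ^n` is linear if it has the form `a + B*` with `B` finite,
where `B*` is the submonoid generated by `B`. -/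
def Linear {n : ℕ} (L : Set (Fin n → ℕ)) : Prop :=
  ∃ (a : Fin n → ℕ) (B : Set (Fin n → ℕ)), B.Finite ∧
    L = (fun b => a + b) '' (AddSubmonoid.closure B : Set (Fin n → ℕ))

/-- A subset of `ℕ^n` is semi-linear if it is a finite union of linear sets. -/
def Semilinear {n : ℕ} (L : Set (Fin n → ℕ)) : Prop :=
  ∃ 𝒮 : Set (Set (Fin n → ℕ)), 𝒮.Finite ∧ (∀ X ∈ 𝒮, Linear X) ∧ L = ⋃₀ 𝒮

section Helpers
open Set AddSubmonoid



/-- sum measure -/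
private def msum {k : ℕ} (v : Fin k → ℕ) : ℕ := ∑ i, v i

private lemma msum_lt {k : ℕ} {y s : Fin k → ℕ} (h : y ≤ s) (hne : y ≠ s) :
    msum y < msum s := by
  obtain ⟨i, hi⟩ : ∃ i, y i ≠ s i := by
    by_contra h'; push_neg at h'; exact hne (funext h')
  exact Finset.sum_lt_sum (fun i _ => h i) ⟨i, Finset.mem_univ i, lt_of_le_of_ne (h i) hi⟩

private lemma exists_minimal_aux {k : ℕ} (S : Set (Fin k → ℕ)) :
    ∀ (N : ℕ) (s : Fin k → ℕ), msum s ≤ N → s ∈ S →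
      ∃ m ∈ S, m ≤ s ∧ ∀ y ∈ S, y ≤ m → y = m := by
  intro N
  induction N with
  | zero =>
    intro s hN hs
    refine ⟨s, hs, le_refl _, fun y hy hys => ?_⟩
    have h0 : msum s = 0 := Nat.le_zero.mp hN
    have : ∀ i, s i = 0 := by
      intro i
      have := Finset.sum_eq_zero_iff.mp h0
      exact this i (Finset.mem_univ i)
    funext i
    exact Nat.le_zero.mp ((hys i).trans_eq (this i)) ▸ (this i).symm
  | succ N ih =>
    intro s hN hs
    by_cases h : ∀ y ∈ S, y ≤ s → y = s
    · exact ⟨s, hs, le_refl _, h⟩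
    · push_neg at h
      obtain ⟨y, hy, hys, hne⟩ := h
      have hlt : msum y < msum s := msum_lt hys hne
      obtain ⟨m, hm, hmy, hmin⟩ := ih y (by omega) hy
      exact ⟨m, hm, hmy.trans hys, hmin⟩

private lemma exists_minimal {k : ℕ} (S : Set (Fin k → ℕ)) {s : Fin k → ℕ} (hs : s ∈ S) :
    ∃ m ∈ S, m ≤ s ∧ ∀ y ∈ S, y ≤ m → y = m :=
  exists_minimal_aux S (msum s) s le_rfl hs

private lemma minimals_finite {k : ℕ} (S : Set (Fin k → ℕ)) :
    {s ∈ S | ∀ y ∈ S, y ≤ s → y = s}.Finite := by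
  have hpwo : Set.IsPWO {s ∈ S | ∀ y ∈ S, y ≤ s → y = s} := Set.isPWO_of_wellQuasiOrderedLE _
  refine IsAntichain.finite_of_partiallyWellOrderedOn ?_ hpwo
  intro x hx y hy hxy hle
  exact hxy (hy.2 x hx.1 hle)

/-- The homogeneous solution set is the closure of a finite set. -/
private lemma homogeneous_fg {k n : ℕ} (F G : (Fin k → ℕ) →+ (Fin n → ℕ)) :
    ∃ B : Set (Fin k → ℕ), B.Finite ∧
      (AddSubmonoid.closure B : Set (Fin k → ℕ)) = {v | F v = G v} := by
  set H : Set (Fin k → ℕ) := {v | F v = G v} with hH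
  set H0 : Set (Fin k → ℕ) := H \ {0} with hH0
  refine ⟨{s ∈ H0 | ∀ y ∈ H0, y ≤ s → y = s}, minimals_finite H0, ?_⟩
  set B := {s ∈ H0 | ∀ y ∈ H0, y ≤ s → y = s} with hB
  apply le_antisymm
  · -- closure B ⊆ H
    have hsub : AddSubmonoid.closure B ≤
        ({ carrier := H,
           add_mem' := fun {a b} ha hb => by
             simp only [hH, Set.mem_setOf_eq] at *
             rw [map_add, map_add, ha, hb],
           zero_mem' := by simp [hH] } : AddSubmonoid (Fin k → ℕ)) :=
      AddSubmonoid.closure_le.mpr fun x hx => hx.1.1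
    exact hsub
  · -- H ⊆ closure B, by strong induction on msum
    intro v hv
    have key : ∀ (N : ℕ) (v : Fin k → ℕ), msum v ≤ N → v ∈ H →
        v ∈ (AddSubmonoid.closure B : Set (Fin k → ℕ)) := by
      intro N
      induction N with
      | zero =>
        intro v hN hv
        have : v = 0 := by
          funext i
          have h0 : msum v = 0 := Nat.le_zero.mp hN
          exact Finset.sum_eq_zero_iff.mp h0 i (Finset.mem_univ i)
        rw [this]
        exact AddSubmonoid.zero_mem _
      | succ N ih =>
        intro v hN hv
        by_cases hv0 : v = 0
        · rw [hv0]; exact AddSubmonoid.zero_mem _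
        · have hv' : v ∈ H0 := ⟨hv, hv0⟩
          obtain ⟨m, hm, hmv, hmin⟩ := exists_minimal H0 hv'
          have hmB : m ∈ B := ⟨hm, hmin⟩
          -- v - m ∈ H
          have hsub : v = m + (v - m) := (add_tsub_cancel_of_le hmv).symm
          have hvm : (v - m) ∈ H := by
            have h1 : F m + F (v - m) = G m + G (v - m) := by
              rw [← map_add, ← map_add, ← hsub]; exact hv
            rw [hm.1] at h1
            exact add_left_cancel h1
          have hmne : m ≠ 0 := hm.2
          have hlt : msum (v - m) < msum v := by
            have : msum v = msum m + msum (v - m) := by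
              conv_lhs => rw [hsub]
              simp [msum, Finset.sum_add_distrib]
            have hm0 : 0 < msum m := by
              rcases Nat.eq_zero_or_pos (msum m) with h | h
              · exfalso
                apply hmne
                funext i
                exact Finset.sum_eq_zero_iff.mp h i (Finset.mem_univ i)
              · exact h
            omega
          have := ih (v - m) (by omega) hvm
          rw [hsub]
          exact AddSubmonoid.add_mem _ (AddSubmonoid.subset_closure hmB) this
    exact key (msum v) v le_rfl hv

/-- The solution set of an inhomogeneous linear system is semilinear. -/
private lemma solutionSet_semilinear {k n : ℕ} (F G : (Fin k → ℕ) →+ (Fin n → ℕ))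
    (c d : Fin n → ℕ) : Semilinear {v | F v + c = G v + d} := by
  set S : Set (Fin k → ℕ) := {v | F v + c = G v + d} with hS
  obtain ⟨B, hBfin, hBeq⟩ := homogeneous_fg F G
  set M := {s ∈ S | ∀ y ∈ S, y ≤ s → y = s} with hM
  refine ⟨(fun s => (fun b => s + b) '' (AddSubmonoid.closure B : Set (Fin k → ℕ))) '' M,
    (minimals_finite S).image _, ?_, ?_⟩
  · rintro _ ⟨s, _, rfl⟩
    exact ⟨s, B, hBfin, rfl⟩
  · apply Set.eq_of_subset_of_subset
    · intro v hv
      obtain ⟨m, hm, hmv, hmin⟩ := exists_minimal S hv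
      rw [Set.mem_sUnion]
      refine ⟨_, ⟨m, ⟨hm, hmin⟩, rfl⟩, ?_⟩
      refine ⟨v - m, ?_, add_tsub_cancel_of_le hmv⟩
      rw [hBeq]
      have hsub : v = m + (v - m) := (add_tsub_cancel_of_le hmv).symm
      have h1 : F m + F (v - m) + c = G m + G (v - m) + d := by
        rw [← map_add, ← map_add, ← hsub]; exact hv
      have h2 : F m + c = G m + d := hm
      show F (v - m) = G (v - m)
      have h3 : F (v - m) + (F m + c) = G (v - m) + (G m + d) := by
        rw [← add_assoc, ← add_assoc]
        rw [add_comm (F (v-m)) (F m), add_comm (G (v-m)) (G m)]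
        exact h1
      rw [h2] at h3
      exact add_right_cancel h3
    · rintro v hv
      rw [Set.mem_sUnion] at hv
      obtain ⟨_, ⟨s, hsM, rfl⟩, w, hw, rfl⟩ := hv
      rw [hBeq] at hw
      show F (s + w) + c = G (s + w) + d
      have h2 : F s + c = G s + d := hsM.1
      have h3 : F w = G w := hw
      rw [map_add, map_add, h3]
      calc F s + G w + c = (F s + c) + G w := by ring
        _ = (G s + d) + G w := by rw [h2]
        _ = G s + G w + d := by ring

private lemma Linear.image' {k n : ℕ} (f : (Fin k → ℕ) →+ (Fin n → ℕ))
    {L : Set (Fin k → ℕ)} (hL : Linear L) : Linear (f '' L) := by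
  obtain ⟨a, B, hBfin, rfl⟩ := hL
  refine ⟨f a, f '' B, hBfin.image f, ?_⟩
  rw [← Set.image_comp]
  have h1 : (AddSubmonoid.closure (f '' B) : Set (Fin n → ℕ)) =
      f '' (AddSubmonoid.closure B : Set (Fin k → ℕ)) := by
    rw [← AddMonoidHom.map_mclosure]
    rfl
  rw [h1, ← Set.image_comp]
  funext x
  simp [map_add]

private lemma Semilinear.image' {k n : ℕ} (f : (Fin k → ℕ) →+ (Fin n → ℕ))
    {L : Set (Fin k → ℕ)} (hL : Semilinear L) : Semilinear (f '' L) := by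
  obtain ⟨𝒮, hfin, hlin, rfl⟩ := hL
  refine ⟨(fun T => f '' T) '' 𝒮, hfin.image _, ?_, ?_⟩
  · rintro _ ⟨T, hT, rfl⟩
    exact Linear.image' f (hlin T hT)
  · exact Set.image_sUnion

private lemma Semilinear.iUnion' {n : ℕ} {ι : Type} [Finite ι] (f : ι → Set (Fin n → ℕ))
    (h : ∀ i, Semilinear (f i)) : Semilinear (⋃ i, f i) := by
  choose 𝒮 h1 h2 h3 using h
  refine ⟨⋃ i, 𝒮 i, Set.finite_iUnion h1, ?_, ?_⟩
  · rintro T hT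
    rw [Set.mem_iUnion] at hT
    obtain ⟨i, hT⟩ := hT
    exact h2 i T hT
  · rw [Set.sUnion_iUnion]
    exact iUnion_congr h3

/-- linear combination hom -/
private def comb {p k : ℕ} (f : Fin p → Fin k → ℕ) : (Fin p → ℕ) →+ (Fin k → ℕ) where
  toFun c := ∑ i, c i • f i
  map_zero' := by simp
  map_add' x y := by
    simp only [Pi.add_apply, add_smul]
    rw [← Finset.sum_add_distrib]

private lemma comb_mem_closure {p k : ℕ} (f : Fin p → Fin k → ℕ) (c : Fin p → ℕ) :
    comb f c ∈ AddSubmonoid.closure (Set.range f) := by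
  show ∑ i, c i • f i ∈ AddSubmonoid.closure (Set.range f)
  apply AddSubmonoid.sum_mem
  intro i _
  exact nsmul_mem (S := AddSubmonoid.closure (Set.range f)) (AddSubmonoid.subset_closure (Set.mem_range_self i)) (c i)

private lemma mem_closure_range {p k : ℕ} (f : Fin p → Fin k → ℕ) (x : Fin k → ℕ)
    (hx : x ∈ AddSubmonoid.closure (Set.range f)) : ∃ c, comb f c = x := by
  have : AddSubmonoid.closure (Set.range f) ≤
      ({ carrier := {x | ∃ c, comb f c = x},
         add_mem' := fun {a b} ha hb => by
           obtain ⟨ca, rfl⟩ := ha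
           obtain ⟨cb, rfl⟩ := hb
           exact ⟨ca + cb, map_add _ _ _⟩,
         zero_mem' := ⟨0, map_zero _⟩ } : AddSubmonoid (Fin k → ℕ)) := by
    apply AddSubmonoid.closure_le.mpr
    rintro _ ⟨i, rfl⟩
    refine ⟨Pi.single i 1, ?_⟩
    show ∑ j, Pi.single i 1 j • f j = f i
    rw [Finset.sum_eq_single i]
    · simp
    · intro j _ hj
      simp [Pi.single_apply, hj]
    · simp
  exact this hx

private def restrict' {a b : ℕ} (e : Fin a → Fin b) : (Fin b → ℕ) →+ (Fin a → ℕ) where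
  toFun v := v ∘ e
  map_zero' := rfl
  map_add' _ _ := rfl

private lemma quotient_linear {n : ℕ} {Lx Ly : Set (Fin n → ℕ)}
    (hx : Linear Lx) (hy : Linear Ly) :
    Semilinear {z : Fin n → ℕ | ∃ x ∈ Lx, z + x ∈ Ly} := by
  obtain ⟨a, A, hAfin, rfl⟩ := hx
  obtain ⟨b, Bs, hBfin, rfl⟩ := hy
  obtain ⟨p, fA, _, rfl⟩ := hAfin.fin_param
  obtain ⟨q, fB, _, rfl⟩ := hBfin.fin_param
  -- packed space: Fin (n + p + q)
  set πz : (Fin (n + p + q) → ℕ) →+ (Fin n → ℕ) :=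
    restrict' (fun i => Fin.castAdd q (Fin.castAdd p i)) with hπz
  set ρ : (Fin (n + p + q) → ℕ) →+ (Fin p → ℕ) :=
    restrict' (fun j => Fin.castAdd q (Fin.natAdd n j)) with hρ
  set σ : (Fin (n + p + q) → ℕ) →+ (Fin q → ℕ) :=
    restrict' (fun j => Fin.natAdd (n + p) j) with hσ
  set F : (Fin (n + p + q) → ℕ) →+ (Fin n → ℕ) := πz + (comb fA).comp ρ with hF
  set G : (Fin (n + p + q) → ℕ) →+ (Fin n → ℕ) := (comb fB).comp σ with hG
  have hsl := Semilinear.image' πz (solutionSet_semilinear F G a b)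
  have heq : πz '' {v | F v + a = G v + b} =
      {z : Fin n → ℕ | ∃ x ∈ (fun b => a + b) ''
          (AddSubmonoid.closure (Set.range fA) : Set (Fin n → ℕ)),
        z + x ∈ (fun b_1 => b + b_1) ''
          (AddSubmonoid.closure (Set.range fB) : Set (Fin n → ℕ))} := by
    ext z
    constructor
    · rintro ⟨v, hv, rfl⟩
      simp only [Set.mem_setOf_eq] at hv ⊢
      refine ⟨a + comb fA (ρ v), ⟨comb fA (ρ v), comb_mem_closure _ _, rfl⟩,
        comb fB (σ v), comb_mem_closure _ _, ?_⟩
      have : πz v + comb fA (ρ v) + a = comb fB (σ v) + b := hv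
      calc b + comb fB (σ v) = comb fB (σ v) + b := add_comm _ _
        _ = πz v + comb fA (ρ v) + a := this.symm
        _ = πz v + (a + comb fA (ρ v)) := by ring
    · rintro ⟨x, ⟨w, hw, rfl⟩, hzx⟩
      obtain ⟨w', hw', hzw'⟩ := hzx
      obtain ⟨c, rfl⟩ := mem_closure_range fA w hw
      obtain ⟨e, rfl⟩ := mem_closure_range fB w' hw'
      refine ⟨Fin.append (Fin.append z c) e, ?_, ?_⟩
      · show F _ + a = G _ + b
        have h1 : πz (Fin.append (Fin.append z c) e) = z := by
          funext i
          show Fin.append (Fin.append z c) e (Fin.castAdd q (Fin.castAdd p i)) = z i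
          rw [Fin.append_left, Fin.append_left]
        have h2 : ρ (Fin.append (Fin.append z c) e) = c := by
          funext j
          show Fin.append (Fin.append z c) e (Fin.castAdd q (Fin.natAdd n j)) = c j
          rw [Fin.append_left, Fin.append_right]
        have h3 : σ (Fin.append (Fin.append z c) e) = e := by
          funext j
          show Fin.append (Fin.append z c) e (Fin.natAdd (n + p) j) = e j
          rw [Fin.append_right]
        show πz _ + comb fA (ρ _) + a = comb fB (σ _) + b
        rw [h1, h2, h3]
        calc z + comb fA c + a = z + (a + comb fA c) := by ring
          _ = b + comb fB e := hzw'.symm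
          _ = comb fB e + b := add_comm _ _
      · funext i
        show Fin.append (Fin.append z c) e (Fin.castAdd q (Fin.castAdd p i)) = z i
        rw [Fin.append_left, Fin.append_left]
  rwa [heq] at hsl


end Helpers

/-- The quotient `Y / X = { z : ∃ x ∈ X, z + x ∈ Y }` of semi-linear subsets of
`ℕ^n` is semi-linear. -/
theorem semilinear_quotient {n : ℕ} (X Y : Set (Fin n → ℕ))
    (hX : Semilinear X) (hY : Semilinear Y) :
    Semilinear {z : Fin n → ℕ | ∃ x ∈ X, z + x ∈ Y} := by
  obtain ⟨𝒳, hXfin, hXlin, rfl⟩ := hX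
  obtain ⟨𝒴, hYfin, hYlin, rfl⟩ := hY
  haveI : Finite ↥𝒳 := hXfin.to_subtype
  haveI : Finite ↥𝒴 := hYfin.to_subtype
  have key : {z : Fin n → ℕ | ∃ x ∈ ⋃₀ 𝒳, z + x ∈ ⋃₀ 𝒴} =
      ⋃ (P : ↥𝒳 × ↥𝒴), {z : Fin n → ℕ | ∃ x ∈ (P.1 : Set (Fin n → ℕ)), z + x ∈ (P.2 : Set (Fin n → ℕ))} := by
    ext z
    simp only [Set.mem_setOf_eq, Set.mem_iUnion, Set.mem_sUnion]
    constructor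
    · rintro ⟨x, ⟨Lx, hLx, hxLx⟩, Ly, hLy, hzLy⟩
      exact ⟨⟨⟨Lx, hLx⟩, ⟨Ly, hLy⟩⟩, x, hxLx, hzLy⟩
    · rintro ⟨⟨⟨Lx, hLx⟩, ⟨Ly, hLy⟩⟩, x, hxLx, hzLy⟩
      exact ⟨x, ⟨Lx, hLx, hxLx⟩, Ly, hLy, hzLy⟩
  rw [key]
  exact Semilinear.iUnion' _ fun P =>
    quotient_linear (hXlin _ P.1.2) (hYlin _ P.2.2)
end

section
/- If φ : M' → M is a morphism of commutative monoids, M' is finitely generated, and X is a rational (semi-linear) subset of M, then φ⁻¹(X) is a rational subset of M'. -/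
open scoped Pointwise

/-- Rational subsets of a commutative monoid `M`: the smallest class containing the
empty set and singletons, closed under finite union, pointwise product of sets, and
the star operation `X ↦ X*` (the submonoid generated by `X`). -/
inductive IsRational {M : Type*} [CommMonoid M] : Set M → Prop
  | empty : IsRational (∅ : Set M)
  | singleton (m : M) : IsRational {m}
  | union {X Y : Set M} : IsRational X → IsRational Y → IsRational (X ∪ Y)
  | mul {X Y : Set M} : IsRational X → IsRational Y → IsRational (X * Y)
  | star {X : Set M} : IsRational X → IsRational (Submonoid.closure X : Set M)

namespace RatAux

/-! ### Hom-like maps from `ℕ^d` -/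

/-- `α : ℕ^d → M` is hom-like if it is a monoid homomorphism (additive to
multiplicative). -/
def HomLike {d : ℕ} {M : Type*} [CommMonoid M] (α : (Fin d → ℕ) → M) : Prop :=
  α 0 = 1 ∧ ∀ u v, α (u + v) = α u * α v

section HomLike

variable {d : ℕ} {M : Type*} [CommMonoid M] {α : (Fin d → ℕ) → M}

theorem HomLike.sum (hα : HomLike α) {ι : Type*} (s : Finset ι) (f : ι → (Fin d → ℕ)) :
    α (∑ i ∈ s, f i) = ∏ i ∈ s, α (f i) := by
  classical
  induction s using Finset.induction with
  | empty => simpa using hα.1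
  | insert _ _ hx ih =>
      rw [Finset.sum_insert hx, Finset.prod_insert hx, hα.2, ih]

theorem HomLike.nsmul (hα : HomLike α) (n : ℕ) (u : Fin d → ℕ) :
    α (n • u) = α u ^ n := by
  induction n with
  | zero => simpa using hα.1
  | succ n ih => rw [succ_nsmul, hα.2, ih, pow_succ]

theorem HomLike.eq_prod (hα : HomLike α) (v : Fin d → ℕ) :
    α v = ∏ i, α (Pi.single i 1) ^ v i := by
  have hv : v = ∑ i, Pi.single i (v i) := by
    rw [Finset.univ_sum_single]
  have hsingle : ∀ i : Fin d, Pi.single i (v i) = v i • (Pi.single i 1 : Fin d → ℕ) := by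
    intro i
    funext j
    by_cases h : j = i
    · subst h; simp
    · simp [Pi.single_apply, h]
  conv_lhs => rw [hv]
  rw [hα.sum]
  refine Finset.prod_congr rfl fun i _ => ?_
  rw [hsingle i, hα.nsmul]

theorem HomLike.prodPow {k : ℕ} (t : Fin k → M) :
    HomLike (fun u : Fin k → ℕ => ∏ i, t i ^ u i) := by
  constructor
  · simp
  · intro u v
    rw [← Finset.prod_mul_distrib]
    refine Finset.prod_congr rfl fun i _ => ?_
    simp [pow_add]

theorem HomLike.comp {M' : Type*} [CommMonoid M'] (hα : HomLike α) (f : M →* M') :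
    HomLike (fun v => f (α v)) :=
  ⟨by show f (α 0) = 1; rw [hα.1, map_one],
   fun u v => by show f (α (u + v)) = f (α u) * f (α v); rw [hα.2, map_mul]⟩

end HomLike

/-! ### Dickson's lemma -/

theorem vec_add_sub {d : ℕ} {u v : Fin d → ℕ} (h : u ≤ v) : u + (v - u) = v := by
  funext i
  exact Nat.add_sub_cancel' (h i)

theorem sum_lt_of_le_of_ne {d : ℕ} {u v : Fin d → ℕ} (h : u ≤ v) (hne : u ≠ v) :
    ∑ i, u i < ∑ i, v i := by
  obtain ⟨i₀, hi₀⟩ : ∃ i, u i ≠ v i := by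
    by_contra hc
    push_neg at hc
    exact hne (funext hc)
  exact Finset.sum_lt_sum (fun i _ => h i) ⟨i₀, Finset.mem_univ _, lt_of_le_of_ne (h i₀) hi₀⟩

/-- Dickson's lemma: every subset of `ℕ^d` has a finite dominating subset. -/
theorem dickson {d : ℕ} (S : Set (Fin d → ℕ)) :
    ∃ F : Finset (Fin d → ℕ), ↑F ⊆ S ∧ ∀ v ∈ S, ∃ u ∈ F, u ≤ v := by
  classical
  set Min : Set (Fin d → ℕ) := {v ∈ S | ∀ u ∈ S, u ≤ v → u = v} with hMin
  have hanti : IsAntichain (· ≤ ·) Min := by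
    intro a ha b hb hne hle
    exact hne (hb.2 a ha.1 hle)
  have hfin : Min.Finite :=
    hanti.finite_of_partiallyWellOrderedOn
      (Set.isPWO_of_wellQuasiOrderedLE Min)
  refine ⟨hfin.toFinset, ?_, ?_⟩
  · intro v hv
    rw [Set.Finite.coe_toFinset] at hv
    exact hv.1
  · intro v hv
    -- strong induction on the total sum
    have key : ∀ n : ℕ, ∀ w, w ∈ S → ∑ i, w i ≤ n → ∃ u ∈ Min, u ≤ w := by
      intro n
      induction n with
      | zero =>
          intro w hw hsum
          refine ⟨w, ⟨hw, fun u hu hle => ?_⟩, le_refl _⟩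
          by_contra hne
          have := sum_lt_of_le_of_ne hle hne
          omega
      | succ n ih =>
          intro w hw hsum
          by_cases hmin : ∀ u ∈ S, u ≤ w → u = w
          · exact ⟨w, ⟨hw, hmin⟩, le_refl _⟩
          · push_neg at hmin
            obtain ⟨u, hu, hle, hne⟩ := hmin
            have := sum_lt_of_le_of_ne hle hne
            obtain ⟨u', hu', hle'⟩ := ih u hu (by omega)
            exact ⟨u', hu', le_trans hle' hle⟩
    obtain ⟨u, hu, hle⟩ := key (∑ i, v i) v hv (le_refl _)
    exact ⟨u, by simpa [Set.Finite.mem_toFinset] using hu, hle⟩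

/-! ### Semilinear sets -/

/-- A linear piece in `ℕ^d`: base point plus the additive monoid generated by a
finite list of periods. -/
def LinSet {d : ℕ} (p : (Fin d → ℕ) × List (Fin d → ℕ)) : Set (Fin d → ℕ) :=
  {v | ∃ w ∈ AddSubmonoid.closure {x | x ∈ p.2}, v = p.1 + w}

def SLSet {d : ℕ} (l : List ((Fin d → ℕ) × List (Fin d → ℕ))) : Set (Fin d → ℕ) :=
  l.foldr (fun p S => LinSet p ∪ S) ∅

/-- Semilinear subsets of `ℕ^d`. -/
def IsSL {d : ℕ} (S : Set (Fin d → ℕ)) : Prop :=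
  ∃ l, S = SLSet l

theorem SLSet_append {d : ℕ} (l₁ l₂ : List ((Fin d → ℕ) × List (Fin d → ℕ))) :
    SLSet (l₁ ++ l₂) = SLSet l₁ ∪ SLSet l₂ := by
  induction l₁ with
  | nil => simp [SLSet]
  | cons p l ih =>
      simp only [SLSet, List.foldr_cons, List.cons_append] at *
      rw [ih, Set.union_assoc]

theorem IsSL.empty {d : ℕ} : IsSL (∅ : Set (Fin d → ℕ)) := ⟨[], rfl⟩

theorem IsSL.union {d : ℕ} {S T : Set (Fin d → ℕ)} (hS : IsSL S) (hT : IsSL T) :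
    IsSL (S ∪ T) := by
  obtain ⟨l₁, rfl⟩ := hS
  obtain ⟨l₂, rfl⟩ := hT
  exact ⟨l₁ ++ l₂, (SLSet_append l₁ l₂).symm⟩

theorem IsSL.translate {d : ℕ} {S : Set (Fin d → ℕ)} (hS : IsSL S) (h : Fin d → ℕ) :
    IsSL ((fun w => h + w) '' S) := by
  obtain ⟨l, rfl⟩ := hS
  refine ⟨l.map fun p => (h + p.1, p.2), ?_⟩
  induction l with
  | nil => simp [SLSet]
  | cons p l ih =>
      simp only [SLSet, List.map_cons, List.foldr_cons] at *
      rw [Set.image_union, ih]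
      congr 1
      ext v
      constructor
      · rintro ⟨u, ⟨w, hw, rfl⟩, rfl⟩
        exact ⟨w, hw, by rw [add_assoc]⟩
      · rintro ⟨w, hw, rfl⟩
        exact ⟨p.1 + w, ⟨w, hw, rfl⟩, by rw [add_assoc]⟩

theorem IsSL.closure_list {d : ℕ} (L : List (Fin d → ℕ)) :
    IsSL (AddSubmonoid.closure {x | x ∈ L} : Set (Fin d → ℕ)) := by
  refine ⟨[(0, L)], ?_⟩
  simp only [SLSet, List.foldr_cons, List.foldr_nil, Set.union_empty]
  ext v
  constructor
  · intro hv
    exact ⟨v, hv, (zero_add v).symm⟩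
  · rintro ⟨w, hw, rfl⟩
    simpa using hw

theorem IsSL.finsetUnion {d : ℕ} {ι : Type*} (F : Finset ι) (f : ι → Set (Fin d → ℕ))
    (hf : ∀ i ∈ F, IsSL (f i)) : IsSL (⋃ i ∈ F, f i) := by
  classical
  revert hf
  refine Finset.induction_on F ?_ ?_
  · intro _
    simpa using IsSL.empty
  · intro a s _ ih hf
    rw [Finset.set_biUnion_insert]
    exact (hf a (Finset.mem_insert_self a s)).union
      (ih fun i hi => hf i (Finset.mem_insert_of_mem hi))


/-! ### The core: equalizer-type sets are semilinear -/

section Core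

variable {d : ℕ} {M : Type*} [CommMonoid M]

variable (α β : (Fin d → ℕ) → M)

/-- Combined evaluation of a pair of exponent vectors. -/
def Gz (z : Fin d ⊕ Fin d →₀ ℕ) : M :=
  α (fun i => z (Sum.inl i)) * β (fun i => z (Sum.inr i))

/-- Values of the two maps on basis vectors. -/
def gv : Fin d ⊕ Fin d → M :=
  Sum.elim (fun i => α (Pi.single i 1)) (fun i => β (Pi.single i 1))

/-- Embed a vector as a left exponent vector. -/
noncomputable def zl {d : ℕ} (v : Fin d → ℕ) : Fin d ⊕ Fin d →₀ ℕ :=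
  Finsupp.equivFunOnFinite.symm (Sum.elim v 0)

/-- Embed a vector as a right exponent vector. -/
noncomputable def zr {d : ℕ} (v : Fin d → ℕ) : Fin d ⊕ Fin d →₀ ℕ :=
  Finsupp.equivFunOnFinite.symm (Sum.elim 0 v)

variable {α β}

theorem Gz_add (hα : HomLike α) (hβ : HomLike β) (z z' : Fin d ⊕ Fin d →₀ ℕ) :
    Gz α β (z + z') = Gz α β z * Gz α β z' := by
  unfold Gz
  have h1 : (fun i => (z + z') (Sum.inl i))
      = (fun i => z (Sum.inl i)) + fun i => z' (Sum.inl i) :=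
    funext fun i => Finsupp.add_apply _ _ _
  have h2 : (fun i => (z + z') (Sum.inr i))
      = (fun i => z (Sum.inr i)) + fun i => z' (Sum.inr i) :=
    funext fun i => Finsupp.add_apply _ _ _
  rw [h1, h2, hα.2, hβ.2, mul_mul_mul_comm]

theorem Gz_zl (hβ : HomLike β) (v : Fin d → ℕ) : Gz α β (zl v) = α v := by
  unfold Gz zl
  have h1 : (fun i => (Finsupp.equivFunOnFinite.symm (Sum.elim v (0 : Fin d → ℕ))) (Sum.inl i)) = v :=
    funext fun i => by simp
  have h2 : (fun i => (Finsupp.equivFunOnFinite.symm (Sum.elim v (0 : Fin d → ℕ))) (Sum.inr i))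
      = (0 : Fin d → ℕ) :=
    funext fun i => by simp
  rw [h1, h2, hβ.1, mul_one]

theorem Gz_zr (hα : HomLike α) (v : Fin d → ℕ) : Gz α β (zr v) = β v := by
  unfold Gz zr
  have h1 : (fun i => (Finsupp.equivFunOnFinite.symm (Sum.elim (0 : Fin d → ℕ) v)) (Sum.inl i))
      = (0 : Fin d → ℕ) :=
    funext fun i => by simp
  have h2 : (fun i => (Finsupp.equivFunOnFinite.symm (Sum.elim (0 : Fin d → ℕ) v)) (Sum.inr i)) = v :=
    funext fun i => by simp
  rw [h1, h2, hα.1, one_mul]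

theorem Gz_eq_prod (hα : HomLike α) (hβ : HomLike β) (z : Fin d ⊕ Fin d →₀ ℕ) :
    Gz α β z = z.prod fun i e => gv α β i ^ e := by
  rw [Finsupp.prod_fintype _ _ fun i => pow_zero _, Fintype.prod_sum_type]
  unfold Gz gv
  rw [hα.eq_prod (fun i => z (Sum.inl i)), hβ.eq_prod (fun i => z (Sum.inr i))]
  simp

variable (α β)

/-- The multiplication-kernel congruence at `σ`. -/
def mulCon (σ : M) : Con M :=
  { r := fun s t => σ * s = σ * t
    iseqv := ⟨fun _ => rfl, Eq.symm, Eq.trans⟩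
    mul' := fun {w x y z} h1 h2 => by
      show σ * (w * y) = σ * (x * z)
      calc σ * (w * y) = σ * w * y := by rw [mul_assoc]
        _ = σ * x * y := by rw [h1]
        _ = σ * y * x := by rw [mul_right_comm]
        _ = σ * z * x := by rw [h2]
        _ = σ * (x * z) := by rw [mul_assoc, mul_comm z x] }

/-- The binomial ideal recording the multiplication kernel at `σ`. -/
noncomputable def Jideal (σ : M) : Ideal (MvPolynomial (Fin d ⊕ Fin d) ℤ) :=
  Ideal.span {q | ∃ z z', σ * Gz α β z = σ * Gz α β z' ∧
    q = MvPolynomial.monomial z 1 - MvPolynomial.monomial z' 1}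

/-- Evaluation into the monoid algebra of the quotient by `mulCon σ`. -/
noncomputable def toMA (σ : M) : MvPolynomial (Fin d ⊕ Fin d) ℤ →+* MonoidAlgebra ℤ (mulCon σ).Quotient :=
  MvPolynomial.eval₂Hom (Int.castRingHom _)
    (fun i => MonoidAlgebra.of ℤ _ ((mulCon σ).mk' (gv α β i)))

variable {α β}

theorem mulCon_mk'_eq_iff (σ x y : M) :
    ((mulCon σ).mk' x = (mulCon σ).mk' y) ↔ σ * x = σ * y :=
  Con.eq _

theorem toMA_monomial (hα : HomLike α) (hβ : HomLike β) (σ : M) (z : Fin d ⊕ Fin d →₀ ℕ) :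
    toMA α β σ (MvPolynomial.monomial z 1)
      = MonoidAlgebra.of ℤ _ ((mulCon σ).mk' (Gz α β z)) := by
  classical
  set F : M →* MonoidAlgebra ℤ (mulCon σ).Quotient :=
    (MonoidAlgebra.of ℤ ((mulCon σ).Quotient)).comp (mulCon σ).mk' with hF
  rw [toMA, MvPolynomial.eval₂Hom_monomial, map_one, one_mul]
  have h1 : (z.prod fun i e => (MonoidAlgebra.of ℤ ((mulCon σ).Quotient)
        ((mulCon σ).mk' (gv α β i))) ^ e)
      = z.prod fun i e => F (gv α β i ^ e) := by
    refine Finsupp.prod_congr fun i _ => ?_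
    rw [map_pow]
    rfl
  rw [h1, ← map_finsuppProd, ← Gz_eq_prod hα hβ]
  rfl

theorem mem_J_iff (hα : HomLike α) (hβ : HomLike β) (σ : M) (z z' : Fin d ⊕ Fin d →₀ ℕ) :
    (MvPolynomial.monomial z 1 - MvPolynomial.monomial z' 1 ∈ Jideal α β σ)
      ↔ σ * Gz α β z = σ * Gz α β z' := by
  constructor
  · intro hmem
    have hker : Jideal α β σ ≤ RingHom.ker (toMA α β σ) := by
      rw [Jideal, Ideal.span_le]
      rintro q ⟨z1, z2, h12, rfl⟩
      rw [SetLike.mem_coe, RingHom.mem_ker, map_sub,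
        toMA_monomial hα hβ, toMA_monomial hα hβ,
        (mulCon_mk'_eq_iff σ _ _).mpr h12, sub_self]
    have h := hker hmem
    rw [RingHom.mem_ker, map_sub, toMA_monomial hα hβ, toMA_monomial hα hβ,
      sub_eq_zero] at h
    exact (mulCon_mk'_eq_iff σ _ _).mp (MonoidAlgebra.of_injective h)
  · intro h
    exact Ideal.subset_span ⟨z, z', h, rfl⟩

theorem J_mono (σ τ : M) : Jideal α β σ ≤ Jideal α β (σ * τ) := by
  rw [Jideal, Ideal.span_le]
  rintro q ⟨z, z', h, rfl⟩
  refine Ideal.subset_span ⟨z, z', ?_, rfl⟩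
  calc σ * τ * Gz α β z = σ * Gz α β z * τ := by rw [mul_right_comm]
    _ = σ * Gz α β z' * τ := by rw [h]
    _ = σ * τ * Gz α β z' := by rw [mul_right_comm]

variable (α β) in
/-- The equalizer set at catalyst `σ`. -/
def ESet (σ : M) : Set (Fin d → ℕ) := {v | σ * α v = σ * β v}

theorem ESet_iff_Gz (hα : HomLike α) (hβ : HomLike β) (σ : M) (v : Fin d → ℕ) :
    v ∈ ESet α β σ ↔ σ * Gz α β (zl v) = σ * Gz α β (zr v) := by
  rw [Gz_zl hβ, Gz_zr hα]
  exact Iff.rfl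

theorem ESet_eq_of_J_eq (hα : HomLike α) (hβ : HomLike β) {σ₁ σ₂ : M}
    (h : Jideal α β σ₁ = Jideal α β σ₂) : ESet α β σ₁ = ESet α β σ₂ := by
  ext v
  rw [ESet_iff_Gz hα hβ, ESet_iff_Gz hα hβ, ← mem_J_iff hα hβ, ← mem_J_iff hα hβ, h]

theorem sub_mem_E (hα : HomLike α) (hβ : HomLike β) {σ : M} {v u : Fin d → ℕ}
    (hv : v ∈ ESet α β σ) (hu : u ∈ ESet α β σ) (hle : u ≤ v) :
    v - u ∈ ESet α β (σ * α u) := by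
  have hv' : σ * α v = σ * β v := hv
  have hu' : σ * α u = σ * β u := hu
  show σ * α u * α (v - u) = σ * α u * β (v - u)
  have h1 : σ * α u * α (v - u) = σ * α v := by rw [mul_assoc, ← hα.2, vec_add_sub hle]
  have h2 : σ * β u * β (v - u) = σ * β v := by rw [mul_assoc, ← hβ.2, vec_add_sub hle]
  rw [h1, hv', hu', h2]

theorem add_mem_E (hα : HomLike α) (hβ : HomLike β) {σ : M} {u w : Fin d → ℕ}
    (hu : u ∈ ESet α β σ) (hw : w ∈ ESet α β (σ * α u)) :
    u + w ∈ ESet α β σ := by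
  have hu' : σ * α u = σ * β u := hu
  have hw' : σ * α u * α w = σ * α u * β w := hw
  show σ * α (u + w) = σ * β (u + w)
  rw [hα.2, hβ.2, ← mul_assoc, ← mul_assoc, ← hu']
  exact hw'

theorem Gz_zl_add (hα : HomLike α) (hβ : HomLike β) (σ' : M) (v : Fin d → ℕ)
    (z : Fin d ⊕ Fin d →₀ ℕ) :
    σ' * Gz α β (zl v + z) = σ' * α v * Gz α β z := by
  rw [Gz_add hα hβ, Gz_zl hβ, mul_assoc]

theorem ESet_SL (hα : HomLike α) (hβ : HomLike β) : ∀ σ : M, IsSL (ESet α β σ) := by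
  classical
  have hwf : WellFounded (InvImage (· > ·) (Jideal α β)) :=
    InvImage.wf _ (inferInstance :
      (WellFoundedGT (Ideal (MvPolynomial (Fin d ⊕ Fin d) ℤ)))).wf
  intro σ
  refine hwf.induction (C := fun σ => IsSL (ESet α β σ)) σ ?_
  intro σ IH
  have hJ_mono : ∀ τ : M, Jideal α β σ ≤ Jideal α β (σ * τ) := fun τ => J_mono σ τ
  set Et : Set (Fin d → ℕ) :=
    {v | v ∈ ESet α β σ ∧ Jideal α β (σ * α v) = Jideal α β σ} with hEtdef
  set Ep : Set (Fin d → ℕ) :=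
    {v | v ∈ ESet α β σ ∧ Jideal α β (σ * α v) ≠ Jideal α β σ} with hEpdef
  have hEt0 : (0 : Fin d → ℕ) ∈ Et := by
    refine ⟨?_, ?_⟩
    · show σ * α 0 = σ * β 0
      rw [hα.1, hβ.1]
    · rw [hα.1, mul_one]
  -- key step inequality
  have hstep : ∀ u v : Fin d → ℕ, Jideal α β (σ * α u) = Jideal α β σ →
      Jideal α β (σ * α u * α v) ≤ Jideal α β (σ * α v) := by
    intro u v huJ
    rw [Jideal, Ideal.span_le]
    rintro q ⟨z, z', h, rfl⟩
    have h1 : (σ * α u) * Gz α β (zl v + z) = (σ * α u) * Gz α β (zl v + z') := by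
      rw [Gz_zl_add hα hβ, Gz_zl_add hα hβ]
      exact h
    have h2 : MvPolynomial.monomial (zl v + z) 1 - MvPolynomial.monomial (zl v + z') 1
        ∈ Jideal α β σ := by
      rw [← huJ]
      exact (mem_J_iff hα hβ _ _ _).mpr h1
    have h3 : σ * Gz α β (zl v + z) = σ * Gz α β (zl v + z') :=
      (mem_J_iff hα hβ _ _ _).mp h2
    have h4 : (σ * α v) * Gz α β z = (σ * α v) * Gz α β z' := by
      rw [← Gz_zl_add hα hβ, ← Gz_zl_add hα hβ]
      exact h3
    exact SetLike.mem_coe.mpr ((mem_J_iff hα hβ _ _ _).mpr h4)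
  have hEt_add : ∀ u ∈ Et, ∀ v ∈ Et, u + v ∈ Et := by
    intro u hu v hv
    have hEeq : ESet α β (σ * α u) = ESet α β σ := ESet_eq_of_J_eq hα hβ hu.2
    refine ⟨add_mem_E hα hβ hu.1 (by rw [hEeq]; exact hv.1), le_antisymm ?_ (hJ_mono _)⟩
    have h1 : σ * α (u + v) = σ * α u * α v := by rw [hα.2, mul_assoc]
    calc Jideal α β (σ * α (u + v)) = Jideal α β (σ * α u * α v) := by rw [h1]
      _ ≤ Jideal α β (σ * α v) := hstep u v hu.2
      _ = Jideal α β σ := hv.2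
  have hEt_sub : ∀ v ∈ Et, ∀ g ∈ Et, g ≤ v → v - g ∈ Et := by
    intro v hv g hg hle
    have hEeq : ESet α β (σ * α g) = ESet α β σ := ESet_eq_of_J_eq hα hβ hg.2
    have hmem : v - g ∈ ESet α β σ := by
      rw [← hEeq]
      exact sub_mem_E hα hβ hv.1 hg.1 hle
    refine ⟨hmem, le_antisymm ?_ (hJ_mono _)⟩
    have hvg : (v - g) + g = v := by rw [add_comm]; exact vec_add_sub hle
    have h1 : σ * α (v - g) * α g = σ * α v := by rw [mul_assoc, ← hα.2, hvg]
    calc Jideal α β (σ * α (v - g)) ≤ Jideal α β (σ * α (v - g) * α g) := J_mono _ _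
      _ = Jideal α β (σ * α v) := by rw [h1]
      _ = Jideal α β σ := hv.2
  obtain ⟨F1, hF1sub, hF1dom⟩ := dickson (Et \ {0})
  obtain ⟨F2, hF2sub, hF2dom⟩ := dickson Ep
  have hEtSL : IsSL Et := by
    have hkey : ∀ n : ℕ, ∀ w, w ∈ Et → (∑ i, w i) ≤ n →
        w ∈ AddSubmonoid.closure (↑F1 : Set (Fin d → ℕ)) := by
      intro n
      induction n with
      | zero =>
          intro w hw hsum
          have hw0 : w = 0 := by
            funext i
            have hle : w i ≤ ∑ j, w j := Finset.single_le_sum (fun j _ => Nat.zero_le _)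
              (Finset.mem_univ i)
            simp only [Pi.zero_apply]
            omega
          rw [hw0]
          exact zero_mem _
      | succ n ih =>
          intro w hw hsum
          by_cases hw0 : w = 0
          · rw [hw0]; exact zero_mem _
          · obtain ⟨g, hgF, hgle⟩ := hF1dom w ⟨hw, by simpa using hw0⟩
            have hg : g ∈ Et \ {0} := hF1sub hgF
            have hgne : g ≠ 0 := by
              intro hc
              exact absurd (by simpa using hc ▸ hg.2) (by simp)
            have hwg : w - g ∈ Et := hEt_sub w hw g hg.1 hgle
            have hsums : ∑ i, (w - g) i + ∑ i, g i = ∑ i, w i := by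
              rw [← Finset.sum_add_distrib]
              refine Finset.sum_congr rfl fun i _ => ?_
              simp only [Pi.sub_apply]
              exact Nat.sub_add_cancel (hgle i)
            have hgpos : 0 < ∑ i, g i := by
              by_contra hc
              push_neg at hc
              have hg0 : g = 0 := by
                funext i
                have h1 : g i ≤ ∑ j, g j := Finset.single_le_sum (fun j _ => Nat.zero_le _)
                  (Finset.mem_univ i)
                simp only [Pi.zero_apply]
                omega
              exact hgne hg0
            have hih := ih (w - g) hwg (by omega)
            have : g + (w - g) = w := vec_add_sub hgle
            rw [← this]
            exact add_mem (AddSubmonoid.subset_closure hgF) hih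
    have hset : Et = ↑(AddSubmonoid.closure {x : Fin d → ℕ | x ∈ F1.toList}) := by
      have hlist : {x : Fin d → ℕ | x ∈ F1.toList} = (↑F1 : Set (Fin d → ℕ)) := by
        ext x
        simp [Finset.mem_toList]
      rw [hlist]
      ext v
      constructor
      · intro hv
        exact hkey (∑ i, v i) v hv (le_refl _)
      · intro hv
        refine AddSubmonoid.closure_induction (motive := fun x _ => x ∈ Et) ?_ hEt0 ?_ hv
        · intro x hx
          exact (hF1sub hx).1
        · intro x y _ _ hx hy
          exact hEt_add x hx y hy
    rw [hset]
    exact IsSL.closure_list _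
  have hdecomp : ESet α β σ = Et ∪ ⋃ h ∈ F2, (fun w => h + w) '' ESet α β (σ * α h) := by
    ext v
    constructor
    · intro hv
      by_cases hJ : Jideal α β (σ * α v) = Jideal α β σ
      · exact Or.inl ⟨hv, hJ⟩
      · obtain ⟨h, hhF, hhle⟩ := hF2dom v ⟨hv, hJ⟩
        have hh : h ∈ Ep := hF2sub hhF
        refine Or.inr (Set.mem_biUnion hhF ?_)
        exact ⟨v - h, sub_mem_E hα hβ hv hh.1 hhle, vec_add_sub hhle⟩
    · rintro (hv | hv)
      · exact hv.1
      · simp only [Set.mem_iUnion, Set.mem_image] at hv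
        obtain ⟨h, hhF, w, hw, rfl⟩ := hv
        exact add_mem_E hα hβ (hF2sub hhF).1 hw
  rw [hdecomp]
  refine hEtSL.union (IsSL.finsetUnion F2 _ fun h hh => ?_)
  have hlt : InvImage (· > ·) (Jideal α β) (σ * α h) σ :=
    lt_of_le_of_ne (hJ_mono (α h)) (Ne.symm (hF2sub hh).2)
  exact (IH _ hlt).translate h

/-- The main semilinearity result: solution sets of equations `π·α(w) = κ·β(w)`
are semilinear. -/
theorem TopSL (hα : HomLike α) (hβ : HomLike β) (π κ : M) :
    IsSL {w : Fin d → ℕ | π * α w = κ * β w} := by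
  classical
  obtain ⟨F, hFsub, hFdom⟩ := dickson {w : Fin d → ℕ | π * α w = κ * β w}
  have hrepr : {w : Fin d → ℕ | π * α w = κ * β w}
      = ⋃ w₀ ∈ F, (fun v => w₀ + v) '' ESet α β (π * α w₀) := by
    ext w
    constructor
    · intro hw
      obtain ⟨w₀, hwF, hle⟩ := hFdom w hw
      have hw₀ : π * α w₀ = κ * β w₀ := hFsub hwF
      refine Set.mem_biUnion hwF ⟨w - w₀, ?_, vec_add_sub hle⟩
      show (π * α w₀) * α (w - w₀) = (π * α w₀) * β (w - w₀)
      have h1 : π * α w₀ * α (w - w₀) = π * α w := by rw [mul_assoc, ← hα.2, vec_add_sub hle]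
      have h2 : κ * β w₀ * β (w - w₀) = κ * β w := by rw [mul_assoc, ← hβ.2, vec_add_sub hle]
      rw [h1, hw, hw₀, h2]
    · intro hw
      simp only [Set.mem_iUnion, Set.mem_image] at hw
      obtain ⟨w₀, hwF, v, hv, rfl⟩ := hw
      have hw₀ : π * α w₀ = κ * β w₀ := hFsub hwF
      have hv' : π * α w₀ * α v = π * α w₀ * β v := hv
      show π * α (w₀ + v) = κ * β (w₀ + v)
      rw [hα.2, hβ.2, ← mul_assoc, ← mul_assoc, ← hw₀]
      exact hv'
  rw [hrepr]
  exact IsSL.finsetUnion F _ fun w₀ _ => (ESet_SL hα hβ (π * α w₀)).translate w₀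

end Core


/-! ### Normal form for rational sets -/

section NF

variable {M : Type*} [CommMonoid M]

/-- A linear piece in `M`: a singleton times a finitely generated submonoid. -/
def Lpiece (p : M × List M) : Set M :=
  {p.1} * (Submonoid.closure {x | x ∈ p.2} : Set M)

def NFset (l : List (M × List M)) : Set M :=
  l.foldr (fun p S => Lpiece p ∪ S) ∅

theorem NFset_append (l₁ l₂ : List (M × List M)) :
    NFset (l₁ ++ l₂) = NFset l₁ ∪ NFset l₂ := by
  induction l₁ with
  | nil => simp [NFset]
  | cons p l ih =>
      simp only [NFset, List.foldr_cons, List.cons_append] at *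
      rw [ih, Set.union_assoc]

theorem closure_union_set (s t : Set M) :
    (Submonoid.closure (s ∪ t) : Set M)
      = (Submonoid.closure s : Set M) * (Submonoid.closure t : Set M) := by
  apply Set.Subset.antisymm
  · set PQ : Submonoid M :=
      { carrier := (Submonoid.closure s : Set M) * (Submonoid.closure t : Set M)
        one_mem' := ⟨1, one_mem _, 1, one_mem _, mul_one 1⟩
        mul_mem' := by
          rintro a b ⟨x, hx, y, hy, rfl⟩ ⟨x', hx', y', hy', rfl⟩
          exact ⟨x * x', mul_mem hx hx', y * y', mul_mem hy hy', (mul_mul_mul_comm x y x' y').symm⟩ }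
    intro x hx
    have hsub : s ∪ t ⊆ ↑PQ := by
      rintro y (hy | hy)
      · exact ⟨y, Submonoid.subset_closure hy, 1, one_mem _, mul_one y⟩
      · exact ⟨1, one_mem _, y, Submonoid.subset_closure hy, one_mul y⟩
    exact Submonoid.closure_le.mpr hsub hx
  · rintro x ⟨a, ha, b, hb, rfl⟩
    exact mul_mem (Submonoid.closure_mono Set.subset_union_left ha)
      (Submonoid.closure_mono Set.subset_union_right hb)

theorem Lpiece_mul (p q : M × List M) :
    Lpiece p * Lpiece q = Lpiece (p.1 * q.1, p.2 ++ q.2) := by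
  unfold Lpiece
  rw [mul_mul_mul_comm, Set.singleton_mul_singleton]
  congr 1
  have hsets : {x : M | x ∈ p.2 ++ q.2} = {x | x ∈ p.2} ∪ {x | x ∈ q.2} := by
    ext x
    simp [List.mem_append]
  rw [hsets, closure_union_set]

def mulNF (l₁ l₂ : List (M × List M)) : List (M × List M) :=
  l₁.flatMap fun p => l₂.map fun q => (p.1 * q.1, p.2 ++ q.2)

theorem NFset_map_mul (p : M × List M) (l₂ : List (M × List M)) :
    NFset (l₂.map fun q => (p.1 * q.1, p.2 ++ q.2)) = Lpiece p * NFset l₂ := by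
  induction l₂ with
  | nil => simp [NFset, Set.mul_empty]
  | cons q l ih =>
      show Lpiece (p.1 * q.1, p.2 ++ q.2) ∪ NFset (l.map fun q => (p.1 * q.1, p.2 ++ q.2))
        = Lpiece p * (Lpiece q ∪ NFset l)
      rw [Set.mul_union, ← Lpiece_mul, ih]

theorem NFset_mulNF (l₁ l₂ : List (M × List M)) :
    NFset (mulNF l₁ l₂) = NFset l₁ * NFset l₂ := by
  induction l₁ with
  | nil => simp [NFset, mulNF, Set.empty_mul]
  | cons p l ih =>
      have h1 : mulNF (p :: l) l₂
          = (l₂.map fun q => (p.1 * q.1, p.2 ++ q.2)) ++ mulNF l l₂ := by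
        simp [mulNF]
      rw [h1, NFset_append, NFset_map_mul, ih,
        show NFset (p :: l) = Lpiece p ∪ NFset l from rfl, Set.union_mul]

theorem Lpiece_one : Lpiece ((1 : M), ([] : List M)) = {1} := by
  unfold Lpiece
  have h : {x : M | x ∈ ([] : List M)} = (∅ : Set M) := by ext x; simp
  rw [h, Submonoid.closure_empty, Submonoid.coe_bot, Set.singleton_mul_singleton, mul_one]

theorem closure_Lpiece (a : M) (L : List M) :
    (Submonoid.closure (Lpiece (a, L)) : Set M)
      = Lpiece (1, []) ∪ Lpiece (a, a :: L) := by
  classical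
  have hins : {x : M | x ∈ a :: L} = insert a {x : M | x ∈ L} := by ext x; simp
  set C := Submonoid.closure {x : M | x ∈ L} with hC
  set C' := Submonoid.closure (insert a {x : M | x ∈ L}) with hC'
  have hCC' : C ≤ C' := Submonoid.closure_mono (Set.subset_insert _ _)
  have haC' : a ∈ C' := Submonoid.subset_closure (Set.mem_insert _ _)
  have hLp : Lpiece (a, a :: L) = {a} * (C' : Set M) := by
    unfold Lpiece
    rw [hins]
  rw [Lpiece_one, hLp]
  apply Set.Subset.antisymm
  · set U : Submonoid M :=
      { carrier := {1} ∪ {a} * (C' : Set M)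
        one_mem' := Or.inl rfl
        mul_mem' := by
          rintro x y (hx1 | ⟨xa, hxa, xc, hxc, rfl⟩) (hy1 | ⟨ya, hya, yc, hyc, rfl⟩)
          · rw [show x = 1 from hx1, show y = 1 from hy1]
            exact Or.inl (mul_one 1)
          · rw [show x = 1 from hx1, one_mul]
            exact Or.inr ⟨ya, hya, yc, hyc, rfl⟩
          · rw [show y = 1 from hy1, mul_one]
            exact Or.inr ⟨xa, hxa, xc, hxc, rfl⟩
          · rw [show xa = a from hxa, show ya = a from hya]
            exact Or.inr ⟨a, rfl, a * (xc * yc), mul_mem haC' (mul_mem hxc hyc),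
              ((mul_assoc a a (xc * yc)).symm).trans (mul_mul_mul_comm a xc a yc).symm⟩ }
    intro x hx
    have hsub : Lpiece (a, L) ⊆ ↑U := by
      rintro w ⟨xa, hxa, xc, hxc, rfl⟩
      exact Or.inr ⟨xa, hxa, xc, hCC' hxc, rfl⟩
    exact Submonoid.closure_le.mpr hsub hx
  · rintro x (hx1 | ⟨xa, hxa, w, hw, rfl⟩)
    · rw [show x = 1 from hx1]
      exact one_mem _
    · rw [show xa = a from hxa]
      have hdecomp : ∀ w, w ∈ C' → ∃ (j : ℕ) (y : M), y ∈ C ∧ w = a ^ j * y := by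
        intro w hw
        refine Submonoid.closure_induction
          (motive := fun w _ => ∃ (j : ℕ) (y : M), y ∈ C ∧ w = a ^ j * y) ?_ ?_ ?_ hw
        · rintro x (rfl | hx)
          · exact ⟨1, 1, one_mem _, by rw [pow_one, mul_one]⟩
          · exact ⟨0, x, Submonoid.subset_closure hx, by rw [pow_zero, one_mul]⟩
        · exact ⟨0, 1, one_mem _, by rw [pow_zero, one_mul]⟩
        · rintro x y _ _ ⟨j, xy, hxy, rfl⟩ ⟨j', yy, hyy, rfl⟩
          exact ⟨j + j', xy * yy, mul_mem hxy hyy, by rw [pow_add, mul_mul_mul_comm]⟩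
      obtain ⟨j, y, hy, rfl⟩ := hdecomp w hw
      have hmem1 : a * y ∈ Submonoid.closure (Lpiece (a, L)) :=
        Submonoid.subset_closure ⟨a, rfl, y, hy, rfl⟩
      have hmem2 : a ∈ Submonoid.closure (Lpiece (a, L)) :=
        Submonoid.subset_closure ⟨a, rfl, 1, one_mem _, mul_one a⟩
      have heq : a * (a ^ j * y) = (a * y) * a ^ j := by
        rw [mul_comm (a * y) (a ^ j), ← mul_assoc, ← mul_assoc, mul_comm a (a ^ j)]
      show a * (a ^ j * y) ∈ ↑(Submonoid.closure (Lpiece (a, L)))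
      rw [heq]
      exact mul_mem hmem1 (pow_mem hmem2 j)

def pairNF (p : M × List M) : List (M × List M) := [(1, []), (p.1, p.1 :: p.2)]

def starNF (l : List (M × List M)) : List (M × List M) :=
  l.foldr (fun p acc => mulNF (pairNF p) acc) [(1, [])]

theorem NFset_pairNF (p : M × List M) :
    NFset (pairNF p) = ↑(Submonoid.closure (Lpiece p)) := by
  show Lpiece (1, []) ∪ (Lpiece (p.1, p.1 :: p.2) ∪ ∅) = _
  rw [Set.union_empty, closure_Lpiece p.1 p.2]

theorem NFset_starNF (l : List (M × List M)) :
    NFset (starNF l) = ↑(Submonoid.closure (NFset l)) := by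
  induction l with
  | nil =>
      show Lpiece ((1 : M), ([] : List M)) ∪ ∅ = ↑(Submonoid.closure (∅ : Set M))
      rw [Set.union_empty, Lpiece_one, Submonoid.closure_empty, Submonoid.coe_bot]
  | cons p l ih =>
      show NFset (mulNF (pairNF p) (starNF l)) = ↑(Submonoid.closure (Lpiece p ∪ NFset l))
      rw [NFset_mulNF, NFset_pairNF, ih, closure_union_set]

theorem exists_NF {X : Set M} (hX : IsRational X) :
    ∃ l : List (M × List M), X = NFset l := by
  induction hX with
  | empty => exact ⟨[], rfl⟩
  | singleton m =>
      refine ⟨[(m, [])], ?_⟩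
      show {m} = Lpiece (m, []) ∪ ∅
      rw [Set.union_empty]
      unfold Lpiece
      have h : {x : M | x ∈ ([] : List M)} = (∅ : Set M) := by ext x; simp
      rw [h, Submonoid.closure_empty, Submonoid.coe_bot, Set.singleton_mul_singleton, mul_one]
  | union _ _ ih1 ih2 =>
      obtain ⟨l₁, rfl⟩ := ih1
      obtain ⟨l₂, rfl⟩ := ih2
      exact ⟨l₁ ++ l₂, (NFset_append l₁ l₂).symm⟩
  | mul _ _ ih1 ih2 =>
      obtain ⟨l₁, rfl⟩ := ih1
      obtain ⟨l₂, rfl⟩ := ih2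
      exact ⟨mulNF l₁ l₂, (NFset_mulNF l₁ l₂).symm⟩
  | star _ ih =>
      obtain ⟨l, rfl⟩ := ih
      exact ⟨starNF l, (NFset_starNF l).symm⟩

end NF

/-! ### Images of semilinear sets are rational -/

section Image

variable {d : ℕ} {M : Type*} [CommMonoid M] {η : (Fin d → ℕ) → M}

theorem image_addClosure (hη : HomLike η) (s : Set (Fin d → ℕ)) :
    η '' ↑(AddSubmonoid.closure s) = ↑(Submonoid.closure (η '' s)) := by
  apply Set.Subset.antisymm
  · rintro x ⟨w, hw, rfl⟩
    refine AddSubmonoid.closure_induction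
      (motive := fun w _ => η w ∈ Submonoid.closure (η '' s)) ?_ ?_ ?_ hw
    · intro x hx
      exact Submonoid.subset_closure ⟨x, hx, rfl⟩
    · show η 0 ∈ Submonoid.closure (η '' s)
      rw [hη.1]
      exact one_mem _
    · intro x y _ _ hx hy
      show η (x + y) ∈ Submonoid.closure (η '' s)
      rw [hη.2]
      exact mul_mem hx hy
  · intro x hx
    refine Submonoid.closure_induction
      (motive := fun x _ => x ∈ η '' ↑(AddSubmonoid.closure s)) ?_ ?_ ?_ hx
    · rintro y ⟨w, hw, rfl⟩
      exact ⟨w, AddSubmonoid.subset_closure hw, rfl⟩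
    · exact ⟨0, zero_mem _, hη.1⟩
    · rintro x y _ _ ⟨u, hu, rfl⟩ ⟨v, hv, rfl⟩
      exact ⟨u + v, add_mem hu hv, hη.2 u v⟩

theorem isRational_finite_image (L : List (Fin d → ℕ)) :
    IsRational (η '' {x | x ∈ L}) := by
  induction L with
  | nil =>
      have h : {x : Fin d → ℕ | x ∈ ([] : List (Fin d → ℕ))} = ∅ := by ext x; simp
      rw [h, Set.image_empty]
      exact IsRational.empty
  | cons a L ih =>
      have h : {x : Fin d → ℕ | x ∈ a :: L} = {a} ∪ {x | x ∈ L} := by ext x; simp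
      rw [h, Set.image_union, Set.image_singleton]
      exact IsRational.union (IsRational.singleton _) ih

theorem SL_image (hη : HomLike η) {S : Set (Fin d → ℕ)} (hS : IsSL S) :
    IsRational (η '' S) := by
  obtain ⟨l, rfl⟩ := hS
  induction l with
  | nil =>
      rw [show SLSet ([] : List ((Fin d → ℕ) × List (Fin d → ℕ))) = ∅ from rfl, Set.image_empty]
      exact IsRational.empty
  | cons p l ih =>
      rw [show SLSet (p :: l) = LinSet p ∪ SLSet l from rfl, Set.image_union]
      refine IsRational.union ?_ ih
      have hrepr : η '' LinSet p
          = {η p.1} * ↑(Submonoid.closure (η '' {x | x ∈ p.2})) := by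
        rw [← image_addClosure hη]
        ext m
        constructor
        · rintro ⟨v, ⟨w, hw, rfl⟩, rfl⟩
          exact ⟨η p.1, rfl, η w, ⟨w, hw, rfl⟩, (hη.2 p.1 w).symm⟩
        · rintro ⟨x, rfl, y, ⟨w, hw, rfl⟩, rfl⟩
          exact ⟨p.1 + w, ⟨w, hw, rfl⟩, hη.2 p.1 w⟩
      rw [hrepr]
      exact IsRational.mul (IsRational.singleton _)
        (IsRational.star (isRational_finite_image p.2))

end Image

/-! ### Membership in closures of ranges -/

theorem mem_closure_range_iff {M : Type*} [CommMonoid M] {n : ℕ} (b : Fin n → M) (x : M) :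
    x ∈ Submonoid.closure (Set.range b) ↔ ∃ c : Fin n → ℕ, x = ∏ j, b j ^ c j := by
  classical
  constructor
  · intro hx
    refine Submonoid.closure_induction
      (motive := fun x _ => ∃ c : Fin n → ℕ, x = ∏ j, b j ^ c j) ?_ ?_ ?_ hx
    · rintro y ⟨i, rfl⟩
      show ∃ c : Fin n → ℕ, b i = ∏ j, b j ^ c j
      refine ⟨Pi.single i 1, ?_⟩
      rw [Finset.prod_eq_single i (fun j _ hji => by rw [Pi.single_eq_of_ne hji, pow_zero])
        (fun h => absurd (Finset.mem_univ i) h)]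
      rw [Pi.single_eq_same, pow_one]
    · show ∃ c : Fin n → ℕ, (1 : M) = ∏ j, b j ^ c j
      exact ⟨0, by simp⟩
    · intro x y _ _ hx hy
      obtain ⟨c, rfl⟩ := hx
      obtain ⟨c', rfl⟩ := hy
      show ∃ cc : Fin n → ℕ, (∏ j, b j ^ c j) * ∏ j, b j ^ c' j = ∏ j, b j ^ cc j
      refine ⟨c + c', ?_⟩
      rw [← Finset.prod_mul_distrib]
      exact Finset.prod_congr rfl fun j _ => by rw [Pi.add_apply, pow_add]
  · rintro ⟨c, rfl⟩
    exact prod_mem fun j _ => pow_mem (Submonoid.subset_closure (Set.mem_range_self j)) _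

theorem HomLike.compLinear {d e : ℕ} {M : Type*} [CommMonoid M] {γ : (Fin e → ℕ) → M}
    (hγ : HomLike γ) (f : (Fin d → ℕ) → (Fin e → ℕ)) (hf0 : f 0 = 0)
    (hfadd : ∀ u v, f (u + v) = f u + f v) : HomLike (fun w => γ (f w)) :=
  ⟨by show γ (f 0) = 1; rw [hf0, hγ.1],
   fun u v => by show γ (f (u+v)) = γ (f u) * γ (f v); rw [hfadd, hγ.2]⟩

/-! ### Preimage of a linear piece -/

theorem preimage_piece {M' M : Type*} [CommMonoid M'] [CommMonoid M]
    (hfg : Monoid.FG M') (φ : M' →* M) (p : M × List M) :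
    IsRational (φ ⁻¹' Lpiece p) := by
  classical
  obtain ⟨a, L⟩ := p
  obtain ⟨T, hT⟩ := hfg.fg_top
  set k := T.toList.length with hk
  set t : Fin k → M' := fun i => T.toList.get i with ht
  set n := L.length with hn
  set b : Fin n → M := fun j => L.get j with hb
  set ψ : (Fin k → ℕ) → M' := fun u => ∏ i, t i ^ u i with hψdef
  have hψ : HomLike ψ := HomLike.prodPow t
  have hψsurj : ∀ m' : M', ∃ u, ψ u = m' := by
    intro m'
    set R : Submonoid M' :=
      { carrier := Set.range ψ
        one_mem' := ⟨0, by simpa using hψ.1⟩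
        mul_mem' := by
          rintro x y ⟨u, rfl⟩ ⟨v, rfl⟩
          exact ⟨u + v, hψ.2 u v⟩ } with hR
    have hTR : ∀ x ∈ (↑T : Set M'), x ∈ R := by
      intro x hx
      obtain ⟨i, hi⟩ := List.mem_iff_get.mp (Finset.mem_toList.mpr hx)
      refine ⟨Pi.single i 1, ?_⟩
      show ∏ j, t j ^ (Pi.single i 1 : Fin k → ℕ) j = x
      rw [Finset.prod_eq_single i (fun j _ hji => by rw [Pi.single_eq_of_ne hji, pow_zero])
        (fun h => absurd (Finset.mem_univ i) h), Pi.single_eq_same, pow_one]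
      exact hi
    have hle : (⊤ : Submonoid M') ≤ R := by
      rw [← hT]
      exact Submonoid.closure_le.mpr hTR
    exact hle (Submonoid.mem_top m')
  set lf : (Fin (k + n) → ℕ) → (Fin k → ℕ) := fun w i => w (Fin.castAdd n i) with hlf
  set rf : (Fin (k + n) → ℕ) → (Fin n → ℕ) := fun w j => w (Fin.natAdd k j) with hrf
  set A : (Fin (k + n) → ℕ) → M := fun w => ∏ j, b j ^ rf w j with hA_def
  set B : (Fin (k + n) → ℕ) → M := fun w => φ (ψ (lf w)) with hB_def
  set η : (Fin (k + n) → ℕ) → M' := fun w => ψ (lf w) with hη_def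
  have hA : HomLike A :=
    (HomLike.prodPow b).compLinear rf rfl (fun u v => rfl)
  have hη : HomLike η := hψ.compLinear lf rfl (fun u v => rfl)
  have hB : HomLike B := hη.comp φ
  have hbrange : {x : M | x ∈ L} = Set.range b := by
    ext x
    constructor
    · intro hx
      obtain ⟨j, hj⟩ := List.mem_iff_get.mp hx
      exact ⟨j, hj⟩
    · rintro ⟨j, rfl⟩
      exact List.get_mem L j
  have hclaim : φ ⁻¹' Lpiece (a, L) = η '' {w | a * A w = 1 * B w} := by
    ext m'
    constructor
    · intro hm'
      obtain ⟨xa, hxa, y, hy, hxy⟩ := hm'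
      rw [show xa = a from hxa] at hxy
      rw [show {x : M | x ∈ L} = Set.range b from hbrange] at hy
      obtain ⟨c, rfl⟩ := (mem_closure_range_iff b y).mp hy
      obtain ⟨u, hu⟩ := hψsurj m'
      set w : Fin (k + n) → ℕ := Fin.addCases u c with hw
      have hlfw : lf w = u := funext fun i => by simp [hlf, hw]
      have hrfw : rf w = c := funext fun j => by simp [hrf, hw]
      refine ⟨w, ?_, ?_⟩
      · show a * (∏ j, b j ^ rf w j) = 1 * φ (ψ (lf w))
        rw [one_mul, hlfw, hrfw, hu]
        exact hxy
      · show ψ (lf w) = m'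
        rw [hlfw, hu]
    · rintro ⟨w, hw, rfl⟩
      have hw2 : a * A w = 1 * B w := hw
      have hw' : a * A w = B w := by rwa [one_mul] at hw2
      refine ⟨a, rfl, A w, ?_, hw'⟩
      rw [show {x : M | x ∈ L} = Set.range b from hbrange]
      exact (mem_closure_range_iff b (A w)).mpr ⟨rf w, rfl⟩
  rw [hclaim]
  exact SL_image hη (TopSL hA hB a 1)

end RatAux


/-- If `φ : M' → M` is a morphism of commutative monoids, `M'` is finitely generated,
and `X` is a rational subset of `M`, then `φ⁻¹(X)` is a rational subset of `M'`. -/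
theorem rational_preimage_of_fg {M' M : Type*} [CommMonoid M'] [CommMonoid M]
    (hfg : Monoid.FG M') (φ : M' →* M) (X : Set M) (hX : IsRational X) :
    IsRational (φ ⁻¹' X) := by
  classical
  obtain ⟨l, rfl⟩ := RatAux.exists_NF hX
  clear hX
  induction l with
  | nil =>
      rw [show RatAux.NFset ([] : List (M × List M)) = ∅ from rfl, Set.preimage_empty]
      exact IsRational.empty
  | cons p l ih =>
      rw [show RatAux.NFset (p :: l) = RatAux.Lpiece p ∪ RatAux.NFset l from rfl,
        Set.preimage_union]
      exact IsRational.union (RatAux.preimage_piece hfg φ p) ih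
end
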